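/- arXiv:2210.10471 — 5 statements merged into one kernel-verified Lean document; each statement's English description precedes it below -/
import Mathlib

section
/- Let 𝒜 be an L-algebra on an infinite-dimensional real Banach space X. Then the restriction of 𝒜^F to X^F is strictly transitive on X^F: for every nonzero x ∈ X^F and every y ∈ X^F there is T ∈ 𝒜^F with Tx = y (equivalently, 𝒜^F x = X^F for every nonzero x ∈ X^F). -/
open Filter Topology

noncomputable section

variable {X : Type*} [NormedAddCommGroup X] [NormedSpace ℝ X]

/-- A bounded operator is of finite rank if its range is finite-dimensional. -/
def FiniteRank (T : X →L[ℝ] X) : Prop :=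
  FiniteDimensional ℝ (LinearMap.range (T : X →ₗ[ℝ] X))

/-- Transitivity: every orbit of a nonzero vector is dense. -/
def IsTransitiveAlg (A : Set (X →L[ℝ] X)) : Prop :=
  ∀ x : X, x ≠ 0 → ∀ y : X, ∀ ε > 0, ∃ T ∈ A, ‖T x - y‖ < ε

/-- A set of operators is an "L-set" if it is transitive and contains
a nonzero finite-rank operator. -/
def IsLSet (A : Set (X →L[ℝ] X)) : Prop :=
  IsTransitiveAlg A ∧ ∃ T ∈ A, T ≠ 0 ∧ FiniteRank T

/-- `A^F`: the finite-rank elements of `A`. -/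
def AF (A : Set (X →L[ℝ] X)) : Set (X →L[ℝ] X) :=
  {T | T ∈ A ∧ FiniteRank T}

/-- `X^F = span {T x : T ∈ A^F, x ∈ X}`. -/
def XF (A : Set (X →L[ℝ] X)) : Submodule ℝ X :=
  Submodule.span ℝ {y | ∃ T ∈ AF A, ∃ x : X, T x = y}

lemma mapsto_XF {A : Set (X →L[ℝ] X)} {T : X →L[ℝ] X} (hT : T ∈ AF A) :
    ∀ x ∈ XF A, (T : X →ₗ[ℝ] X) x ∈ XF A :=
  fun x _ => Submodule.subset_span ⟨T, hT, x, rfl⟩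

/-- `𝔻`: the algebra of all `ℝ`-linear endomorphisms of `X^F` commuting with the
restriction to `X^F` of every operator in `A^F`. -/
def DD (A : Set (X →L[ℝ] X)) : Subalgebra ℝ (Module.End ℝ (XF A)) :=
  Subalgebra.centralizer ℝ
    {S | ∃ T : X →L[ℝ] X, ∃ hT : T ∈ AF A, S = (T : X →ₗ[ℝ] X).restrict (mapsto_XF hT)}

def RealType (A : Set (X →L[ℝ] X)) : Prop := Nonempty (DD A ≃ₐ[ℝ] ℝ)
def ComplexType (A : Set (X →L[ℝ] X)) : Prop := Nonempty (DD A ≃ₐ[ℝ] ℂ)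
def QuaternionType (A : Set (X →L[ℝ] X)) : Prop := Nonempty (DD A ≃ₐ[ℝ] Quaternion ℝ)

/-- `A` is dense: on any finite linearly independent family, elements of `A`
approximate arbitrary prescribed values. -/
def IsDenseAlg (A : Set (X →L[ℝ] X)) : Prop :=
  ∀ ε > 0, ∀ n : ℕ, ∀ x : Fin n → X, LinearIndependent ℝ x →
    ∀ y : Fin n → X, ∃ T ∈ A, ∀ i, ‖T (x i) - y i‖ < ε

/-- `A` is `(1/k)`-dense. -/
def IsFracDense (k : ℕ) (A : Set (X →L[ℝ] X)) : Prop :=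
  ∀ ε > 0, ∀ n : ℕ, ∀ x : Fin (k * n) → X, LinearIndependent ℝ x →
    ∀ y : Fin n → X, ∃ j : Fin n → Fin (k * n), ∃ T ∈ A,
      ∀ i, ‖y i - T (x (j i))‖ < ε

/-- `T` lies in the closure of `A` in the strong operator topology. -/
def InSOTClosure (A : Set (X →L[ℝ] X)) (T : X →L[ℝ] X) : Prop :=
  ∀ ε > 0, ∀ s : Finset X, ∃ S ∈ A, ∀ x ∈ s, ‖S x - T x‖ < ε

/-- Closure of `A` in the strong operator topology. -/
def SOTcl (A : Set (X →L[ℝ] X)) : Set (X →L[ℝ] X) := {T | InSOTClosure A T}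

/-- `A` is closed in the strong operator topology. -/
def SOTClosed (A : Set (X →L[ℝ] X)) : Prop :=
  ∀ T : X →L[ℝ] X, InSOTClosure A T → T ∈ A

/-- A Lomonosov set: transitive, SOT-closed, containing a nonzero compact operator. -/
def IsLomonosov (A : Set (X →L[ℝ] X)) : Prop :=
  IsTransitiveAlg A ∧ SOTClosed A ∧ ∃ T ∈ A, T ≠ 0 ∧ IsCompactOperator (⇑T)

/-- Similarity of operator algebras. -/
def SimilarAlg (A B : Set (X →L[ℝ] X)) : Prop :=
  ∃ T : X ≃L[ℝ] X,
    (fun S => (T : X →L[ℝ] X).comp (S.comp ((T.symm : X →L[ℝ] X)))) '' A = B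

/-- A partial complex structure: a densely defined operator `S` with `S ∘ S = -1`
(equivalently `S⁻¹ = -S`) mapping its domain onto itself. -/
structure PCS (X : Type*) [NormedAddCommGroup X] [NormedSpace ℝ X] where
  domain : Submodule ℝ X
  dense' : Dense (domain : Set X)
  map : domain →ₗ[ℝ] domain
  anti : ∀ x : domain, map (map x) = -x

/-- A PCS is closed if its graph is closed in `X × X`. -/
def PCSClosed (S : PCS X) : Prop :=
  IsClosed (Set.range fun x : S.domain => ((x : X), (S.map x : X)))

/-- The algebra `𝒜_S` of all bounded operators leaving `D(S)` invariant and
commuting with `S` on `D(S)`. -/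
def AlgS (S : PCS X) : Set (X →L[ℝ] X) :=
  {T | ∀ x : S.domain, ∃ y : S.domain, (y : X) = T x ∧ T (S.map x : X) = (S.map y : X)}

/-- A representation of the quaternion group `G_ℍ` by linear bijections of a dense
subspace of `X`, with `π(1) = id` and `π(-1) = -id`. -/
structure QRep (X : Type*) [NormedAddCommGroup X] [NormedSpace ℝ X] where
  domain : Submodule ℝ X
  dense' : Dense (domain : Set X)
  pi : QuaternionGroup 2 → Module.End ℝ domain
  pi_one : pi 1 = 1
  pi_mul : ∀ g h, pi (g * h) = pi g * pi h
  pi_neg_one : pi (QuaternionGroup.a 2) = -1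

/-- The representation is closed. -/
def QRepClosed (ρ : QRep X) : Prop :=
  ∀ (x : ℕ → ρ.domain) (w : QuaternionGroup 2 → X),
    (∀ g, Tendsto (fun n => (ρ.pi g (x n) : X)) atTop (𝓝 (w g))) →
    ∃ z : ρ.domain, ∀ g, w g = (ρ.pi g z : X)

/-- The representation is regular: the functionals bounded on the orbit of the
representation are weak*-dense in the dual. -/
def QRepRegular (ρ : QRep X) : Prop :=
  Dense ((StrongDual.toWeakDual) ''
    {f : StrongDual ℝ X |
      ∃ C > 0, ∀ g : QuaternionGroup 2, ∀ x : ρ.domain, |f (ρ.pi g x : X)| ≤ C * ‖(x : X)‖})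

/-- The algebra `𝒜_π`. -/
def AlgPi (ρ : QRep X) : Set (X →L[ℝ] X) :=
  {T | ∀ x : ρ.domain, ∃ y : ρ.domain, (y : X) = T x ∧
    ∀ g : QuaternionGroup 2, T (ρ.pi g x : X) = (ρ.pi g y : X)}



section Aux

lemma finiteRank_of_range_le {T : X →L[ℝ] X} {p : Submodule ℝ X}
    (hp : FiniteDimensional ℝ p) (h : LinearMap.range (T : X →ₗ[ℝ] X) ≤ p) :
    FiniteRank T := by
  haveI := hp
  exact Submodule.finiteDimensional_of_le h

lemma finiteRank_comp {T S : X →L[ℝ] X} (hT : FiniteRank T) :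
    FiniteRank (T.comp S) := by
  refine finiteRank_of_range_le hT ?_
  rintro y ⟨x, rfl⟩
  exact ⟨S x, rfl⟩

lemma finiteRank_add {T S : X →L[ℝ] X} (hT : FiniteRank T) (hS : FiniteRank S) :
    FiniteRank (T + S) := by
  haveI : FiniteDimensional ℝ (LinearMap.range (T : X →ₗ[ℝ] X)) := hT
  haveI : FiniteDimensional ℝ (LinearMap.range (S : X →ₗ[ℝ] X)) := hS
  refine finiteRank_of_range_le
    (p := LinearMap.range (T : X →ₗ[ℝ] X) ⊔ LinearMap.range (S : X →ₗ[ℝ] X))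
    (Submodule.finiteDimensional_sup _ _) ?_
  rintro y ⟨x, rfl⟩
  exact Submodule.add_mem_sup ⟨x, rfl⟩ ⟨x, rfl⟩

lemma finiteRank_comp_left {T S : X →L[ℝ] X} (hS : FiniteRank S) :
    FiniteRank (T.comp S) := by
  haveI : FiniteDimensional ℝ (LinearMap.range (S : X →ₗ[ℝ] X)) := hS
  refine finiteRank_of_range_le
    (p := Submodule.map (T : X →ₗ[ℝ] X) (LinearMap.range (S : X →ₗ[ℝ] X)))
    inferInstance ?_
  rintro y ⟨x, rfl⟩
  exact ⟨S x, ⟨x, rfl⟩, rfl⟩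

lemma finiteRank_smul {T : X →L[ℝ] X} (c : ℝ) (hT : FiniteRank T) :
    FiniteRank (c • T) := by
  refine finiteRank_of_range_le hT ?_
  rintro y ⟨x, rfl⟩
  exact Submodule.smul_mem _ c ⟨x, rfl⟩

lemma finiteRank_zero : FiniteRank (0 : X →L[ℝ] X) := by
  refine finiteRank_of_range_le (p := (⊥ : Submodule ℝ X)) inferInstance ?_
  rintro y ⟨x, rfl⟩
  simp

/-- The orbit `A^F x` as a submodule. -/
def orbitSub (A : NonUnitalSubalgebra ℝ (X →L[ℝ] X)) (x : X) : Submodule ℝ X where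
  carrier := {y | ∃ T ∈ AF (A : Set (X →L[ℝ] X)), T x = y}
  add_mem' := by
    rintro a b ⟨T, ⟨hTA, hTF⟩, rfl⟩ ⟨S, ⟨hSA, hSF⟩, rfl⟩
    exact ⟨T + S, ⟨add_mem hTA hSA, finiteRank_add hTF hSF⟩, rfl⟩
  zero_mem' := ⟨0, ⟨zero_mem A, finiteRank_zero⟩, rfl⟩
  smul_mem' := by
    rintro c a ⟨T, ⟨hTA, hTF⟩, rfl⟩
    exact ⟨c • T, ⟨SMulMemClass.smul_mem c hTA, finiteRank_smul c hTF⟩, rfl⟩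

lemma mem_orbitSub {A : NonUnitalSubalgebra ℝ (X →L[ℝ] X)} {x y : X} :
    y ∈ orbitSub A x ↔ ∃ T ∈ AF (A : Set (X →L[ℝ] X)), T x = y := Iff.rfl

end Aux

/-- For an L-algebra `𝒜`, the restriction of `𝒜^F` to `X^F` is strictly
transitive on `X^F`. -/
theorem stmt3 {X : Type*} [NormedAddCommGroup X] [NormedSpace ℝ X] [CompleteSpace X]
    (hinf : ¬ FiniteDimensional ℝ X)
    (A : NonUnitalSubalgebra ℝ (X →L[ℝ] X))
    (hA : IsLSet (A : Set (X →L[ℝ] X))) :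
    ∀ x ∈ XF (A : Set (X →L[ℝ] X)), x ≠ 0 →
      ∀ y ∈ XF (A : Set (X →L[ℝ] X)),
        ∃ T ∈ AF (A : Set (X →L[ℝ] X)), T x = y := by
  classical
  obtain ⟨htrans, T0, hT0A, hT0ne, hT0F⟩ := hA
  intro x hxXF hxne y hy
  -- Step 1: there is `K ∈ A^F` with `K x ≠ 0`.
  obtain ⟨u, hu⟩ : ∃ u, T0 u ≠ 0 := by
    by_contra h
    push_neg at h
    exact hT0ne (ContinuousLinearMap.ext fun v => by simpa using h v)
  have hupos : 0 < ‖T0 u‖ := norm_pos_iff.mpr hu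
  set ε := ‖T0 u‖ / (‖T0‖ + 1) with hε
  have hεpos : 0 < ε := by positivity
  obtain ⟨S, hSA, hS⟩ := htrans x hxne u ε hεpos
  have hKx : T0 (S x) ≠ 0 := by
    intro h0
    have h1 : ‖T0 (S x) - T0 u‖ ≤ ‖T0‖ * ‖S x - u‖ := by
      have := T0.le_opNorm (S x - u)
      simpa [map_sub] using this
    rw [h0, zero_sub, norm_neg] at h1
    have h2 : ‖T0‖ * ‖S x - u‖ < ‖T0‖ * ε + ε := by
      nlinarith [norm_nonneg (S x - u), ContinuousLinearMap.opNorm_nonneg T0]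
    have h3 : ‖T0‖ * ε + ε = ‖T0 u‖ := by
      rw [hε, show ‖T0‖ * (‖T0 u‖ / (‖T0‖ + 1)) + ‖T0 u‖ / (‖T0‖ + 1)
          = (‖T0‖ + 1) * (‖T0 u‖ / (‖T0‖ + 1)) by ring]
      field_simp
    linarith
  set K : X →L[ℝ] X := T0.comp S with hKdef
  have hKAF : K ∈ AF (A : Set (X →L[ℝ] X)) :=
    ⟨mul_mem hT0A hSA, finiteRank_comp hT0F⟩
  have hKxne : K x ≠ 0 := hKx
  -- Step 2: the orbit `A^F x` is dense in `X`.
  have hdense : Dense ((orbitSub A x : Set X)) := by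
    rw [Metric.dense_iff]
    intro w r hr
    obtain ⟨T, hTA, hT⟩ := htrans (K x) hKxne w r hr
    refine ⟨T (K x), ?_, ?_⟩
    · rw [Metric.mem_ball, dist_eq_norm]
      exact hT
    · exact ⟨T.comp K, ⟨mul_mem hTA hKAF.1, finiteRank_comp_left hKAF.2⟩, rfl⟩
  -- Step 3: for `T ∈ A^F`, the range of `T` is contained in the orbit.
  have hrange : ∀ T ∈ AF (A : Set (X →L[ℝ] X)), ∀ v : X, T v ∈ orbitSub A x := by
    rintro T ⟨hTA, hTF⟩ v
    set N : Submodule ℝ X := Submodule.map (T : X →ₗ[ℝ] X) (orbitSub A x) with hN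
    haveI hNfd : FiniteDimensional ℝ N := by
      haveI : FiniteDimensional ℝ (LinearMap.range (T : X →ₗ[ℝ] X)) := hTF
      exact Submodule.finiteDimensional_of_le LinearMap.map_le_range
    have hNclosed : IsClosed (N : Set X) := N.closed_of_finiteDimensional
    have hvN : T v ∈ N := by
      have hvcl : v ∈ closure ((orbitSub A x : Set X)) := by
        rw [hdense.closure_eq]; trivial
      have : T v ∈ closure (N : Set X) := by
        refine map_mem_closure T.continuous hvcl ?_
        intro a ha
        exact ⟨a, ha, rfl⟩
      rwa [hNclosed.closure_eq] at this
    -- N ≤ orbitSub A x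
    obtain ⟨w, hw, hTw⟩ := hvN
    obtain ⟨R, ⟨hRA, hRF⟩, rfl⟩ := hw
    refine hTw ▸ ⟨T.comp R, ⟨mul_mem hTA hRA, finiteRank_comp hTF⟩, rfl⟩
  -- Conclusion: `X^F ≤ A^F x`.
  have hXF : XF (A : Set (X →L[ℝ] X)) ≤ orbitSub A x := by
    rw [XF, Submodule.span_le]
    rintro z ⟨T, hT, v, rfl⟩
    exact hrange T hT v
  exact hXF hy


end
end

section
/- Let 𝒜 be an L-algebra on an infinite-dimensional real Banach space X. Then every operator S ∈ 𝔻 is closable as a densely defined operator on X: if (x_n) is a sequence in X^F with x_n → 0 in X and Sx_n → y in X, then y = 0. -/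
open Filter Topology

noncomputable section

variable {X : Type*} [NormedAddCommGroup X] [NormedSpace ℝ X]

/-- For an L-algebra `𝒜`, every operator `S ∈ 𝔻` is closable as a densely
defined operator on `X`: if `x_n → 0` in `X` with `x_n ∈ X^F` and `S x_n → y`, then `y = 0`. -/
theorem stmt6 {X : Type*} [NormedAddCommGroup X] [NormedSpace ℝ X] [CompleteSpace X]
    (hinf : ¬ FiniteDimensional ℝ X)
    (A : NonUnitalSubalgebra ℝ (X →L[ℝ] X))
    (hA : IsLSet (A : Set (X →L[ℝ] X))) :
    ∀ S ∈ DD (A : Set (X →L[ℝ] X)),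
      ∀ (x : ℕ → XF (A : Set (X →L[ℝ] X))) (y : X),
        Tendsto (fun n => ((x n : X))) atTop (𝓝 0) →
        Tendsto (fun n => ((S (x n) : X))) atTop (𝓝 y) → y = 0 := by
  intro S hS x y hx hy
  -- Step A: every finite-rank element of A kills y
  have key : ∀ T : X →L[ℝ] X, T ∈ AF (A : Set (X →L[ℝ] X)) → T y = 0 := by
    intro T hT
    have hcomm : (T : X →ₗ[ℝ] X).restrict (mapsto_XF hT) * S
        = S * (T : X →ₗ[ℝ] X).restrict (mapsto_XF hT) :=
      (Subalgebra.mem_centralizer_iff ℝ).mp hS _ ⟨T, hT, rfl⟩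
    haveI hfd : FiniteDimensional ℝ (LinearMap.range (T : X →ₗ[ℝ] X)) := hT.2
    have hle : LinearMap.range (T : X →ₗ[ℝ] X) ≤ XF (A : Set (X →L[ℝ] X)) := by
      rintro v ⟨w, rfl⟩
      exact Submodule.subset_span ⟨T, hT, w, rfl⟩
    set L : (LinearMap.range (T : X →ₗ[ℝ] X)) →ₗ[ℝ] X :=
      (XF (A : Set (X →L[ℝ] X))).subtype ∘ₗ (S ∘ₗ Submodule.inclusion hle) with hL
    have hLcont : Continuous L := L.continuous_of_finiteDimensional
    set v : ℕ → LinearMap.range (T : X →ₗ[ℝ] X) :=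
      fun n => ⟨T (x n : X), LinearMap.mem_range.mpr ⟨(x n : X), rfl⟩⟩ with hv
    have hvtend : Tendsto v atTop (𝓝 0) := by
      rw [tendsto_subtype_rng]
      have := (T.continuous.tendsto 0).comp hx
      simpa [Function.comp_def] using this
    have hLv : Tendsto (fun n => L (v n)) atTop (𝓝 0) := by
      have := (hLcont.tendsto 0).comp hvtend
      simpa [Function.comp_def] using this
    have heq : ∀ n, L (v n) = T ((S (x n) : X)) := by
      intro n
      have h1 : Submodule.inclusion hle (v n)
          = (T : X →ₗ[ℝ] X).restrict (mapsto_XF hT) (x n) := rfl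
      have h2 := LinearMap.congr_fun hcomm (x n)
      simp only [Module.End.mul_apply] at h2
      calc L (v n) = ((S ((T : X →ₗ[ℝ] X).restrict (mapsto_XF hT) (x n)) : X)) := by
              rw [hL]; simp [h1]
        _ = (((T : X →ₗ[ℝ] X).restrict (mapsto_XF hT) (S (x n)) : X)) := by rw [← h2]
        _ = T ((S (x n) : X)) := rfl
    have hTy : Tendsto (fun n => T ((S (x n) : X))) atTop (𝓝 (T y)) :=
      (T.continuous.tendsto y).comp hy
    have : Tendsto (fun n => T ((S (x n) : X))) atTop (𝓝 0) := by
      simpa [heq] using hLv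
    exact tendsto_nhds_unique hTy this
  -- Step B: conclude y = 0
  by_contra hy0
  obtain ⟨hTrans, T₀, hT₀A, hT₀ne, hT₀fr⟩ := hA
  obtain ⟨z, hz⟩ : ∃ z, T₀ z ≠ 0 := by
    by_contra h
    push_neg at h
    exact hT₀ne (ContinuousLinearMap.ext fun w => by simpa using h w)
  have hzpos : 0 < ‖T₀ z‖ := norm_pos_iff.mpr hz
  have hεpos : 0 < ‖T₀ z‖ / (‖T₀‖ + 1) := div_pos hzpos (by positivity)
  obtain ⟨R, hRA, hR⟩ := hTrans y hy0 z _ hεpos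
  have hTRfr : FiniteRank (T₀ * R) := by
    have hle2 : LinearMap.range ((T₀ * R : X →L[ℝ] X) : X →ₗ[ℝ] X) ≤ LinearMap.range (T₀ : X →ₗ[ℝ] X) := by
      rintro w ⟨u, rfl⟩
      exact LinearMap.mem_range.mpr ⟨R u, rfl⟩
    haveI : FiniteDimensional ℝ (LinearMap.range (T₀ : X →ₗ[ℝ] X)) := hT₀fr
    exact Submodule.finiteDimensional_of_le hle2
  have hTR : (T₀ * R) ∈ AF (A : Set (X →L[ℝ] X)) := ⟨mul_mem hT₀A hRA, hTRfr⟩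
  have h0 : T₀ (R y) = 0 := key (T₀ * R) hTR
  have h1 : ‖T₀ z‖ ≤ ‖T₀‖ * ‖R y - z‖ := by
    have : T₀ (R y - z) = - T₀ z := by rw [map_sub, h0]; abel
    calc ‖T₀ z‖ = ‖T₀ (R y - z)‖ := by rw [this, norm_neg]
      _ ≤ ‖T₀‖ * ‖R y - z‖ := T₀.le_opNorm _
  have hn0 : (0:ℝ) ≤ ‖T₀‖ := norm_nonneg _
  have hc : ‖R y - z‖ * (‖T₀‖ + 1) < ‖T₀ z‖ :=
    (lt_div_iff₀ (by positivity)).mp hR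
  nlinarith [norm_nonneg (R y - z)]


end
end

section
/- Let 𝒜 be an L-algebra on an infinite-dimensional real Banach space X. (i) If 𝒜 is of complex type then the rank of every operator T ∈ 𝒜^F is even. (ii) If 𝒜 is of quaternion type then the rank of every operator T ∈ 𝒜^F is divisible by four. -/
open Filter Topology

noncomputable section

variable {X : Type*} [NormedAddCommGroup X] [NormedSpace ℝ X]

section Aux

variable {X : Type*} [NormedAddCommGroup X] [NormedSpace ℝ X]

lemma XF_dense (A : NonUnitalSubalgebra ℝ (X →L[ℝ] X))
    (hA : IsLSet (A : Set (X →L[ℝ] X))) :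
    Dense ((XF (A : Set (X →L[ℝ] X)) : Set X)) := by
  obtain ⟨htrans, T0, hT0A, hT0ne, hT0fr⟩ := hA
  obtain ⟨y0, hy0⟩ : ∃ y, T0 y ≠ 0 := by
    by_contra h
    push_neg at h
    exact hT0ne (ContinuousLinearMap.ext fun y => by simpa using h y)
  rw [Metric.dense_iff]
  intro x r hr
  obtain ⟨S, hS, hdist⟩ := htrans (T0 y0) hy0 x r hr
  refine ⟨S (T0 y0), Metric.mem_ball.2 ?_, ?_⟩
  · rw [dist_eq_norm]; exact hdist
  · have hmem : S * T0 ∈ AF (A : Set (X →L[ℝ] X)) := by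
      refine ⟨mul_mem hS hT0A, ?_⟩
      unfold FiniteRank
      haveI : FiniteDimensional ℝ (LinearMap.range (T0 : X →ₗ[ℝ] X)) := hT0fr
      haveI : FiniteDimensional ℝ ((LinearMap.range (T0 : X →ₗ[ℝ] X)).map (S : X →ₗ[ℝ] X)) :=
        Module.Finite.map _ _
      refine Submodule.finiteDimensional_of_le (S₂ := (LinearMap.range (T0 : X →ₗ[ℝ] X)).map (S : X →ₗ[ℝ] X)) ?_
      rintro _ ⟨x, rfl⟩
      exact ⟨T0 x, LinearMap.mem_range_self _ _, rfl⟩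
    exact Submodule.subset_span ⟨S * T0, hmem, y0, rfl⟩

lemma map_XF_eq_range (A : NonUnitalSubalgebra ℝ (X →L[ℝ] X))
    (hA : IsLSet (A : Set (X →L[ℝ] X))) {T : X →L[ℝ] X}
    (hT : T ∈ AF (A : Set (X →L[ℝ] X))) :
    (XF (A : Set (X →L[ℝ] X))).map (T : X →ₗ[ℝ] X) = LinearMap.range (T : X →ₗ[ℝ] X) := by
  set A' := (A : Set (X →L[ℝ] X))
  refine le_antisymm LinearMap.map_le_range ?_
  haveI : FiniteDimensional ℝ (LinearMap.range (T : X →ₗ[ℝ] X)) := hT.2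
  haveI : FiniteDimensional ℝ ((XF A').map (T : X →ₗ[ℝ] X)) :=
    Submodule.finiteDimensional_of_le LinearMap.map_le_range
  have hcl : IsClosed (((XF A').map (T : X →ₗ[ℝ] X) : Submodule ℝ X) : Set X) :=
    Submodule.closed_of_finiteDimensional _
  rintro _ ⟨x, rfl⟩
  have hx : x ∈ closure ((XF A' : Submodule ℝ X) : Set X) := XF_dense A hA x
  have := map_mem_closure T.continuous hx
    (fun y hy => (Submodule.mem_map_of_mem hy : T y ∈ (XF A').map (T : X →ₗ[ℝ] X)))
  rwa [hcl.closure_eq] at this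

lemma key_rank_dvd (A : NonUnitalSubalgebra ℝ (X →L[ℝ] X))
    (hA : IsLSet (A : Set (X →L[ℝ] X)))
    (K : Type) [DivisionRing K] [Algebra ℝ K]
    (e : DD (A : Set (X →L[ℝ] X)) ≃ₐ[ℝ] K)
    {T : X →L[ℝ] X} (hT : T ∈ AF (A : Set (X →L[ℝ] X))) :
    Module.finrank ℝ K ∣ Module.finrank ℝ (LinearMap.range (T : X →ₗ[ℝ] X)) := by
  set A' := (A : Set (X →L[ℝ] X)) with hA'
  let Tr : XF A' →ₗ[ℝ] XF A' := (T : X →ₗ[ℝ] X).restrict (mapsto_XF hT)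
  let ψ : K →ₐ[ℝ] Module.End ℝ (XF A') := ((DD A').val.comp e.symm.toAlgHom)
  have hcomm : ∀ k : K, Tr * ψ k = ψ k * Tr := by
    intro k
    exact (Subalgebra.mem_centralizer_iff ℝ).mp (e.symm k).2 Tr ⟨T, hT, rfl⟩
  set V := LinearMap.range Tr with hV
  have hVinv : ∀ k : K, ∀ v ∈ V, ψ k v ∈ V := by
    rintro k _ ⟨x, rfl⟩
    refine ⟨ψ k x, ?_⟩
    have := congrArg (fun f : Module.End ℝ (XF A') => f x) (hcomm k)
    simpa [Module.End.mul_apply] using this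
  let Ψ : K →+* Module.End ℝ V :=
  { toFun := fun k => (ψ k).restrict (fun v hv => hVinv k v hv)
    map_one' := by
      ext v
      simp [LinearMap.restrict_apply]
    map_mul' := fun k₁ k₂ => by
      ext v
      simp [LinearMap.restrict_apply, map_mul, Module.End.mul_apply]
    map_zero' := by
      ext v
      simp [LinearMap.restrict_apply]
    map_add' := fun k₁ k₂ => by
      ext v
      simp [LinearMap.restrict_apply] }
  letI instKV : Module K V := Module.compHom V Ψ
  letI : IsScalarTower ℝ K V := by
    refine ⟨fun r k v => ?_⟩
    show Ψ (r • k) v = r • (Ψ k v)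
    have hp : ψ (r • k) = r • ψ k := by
      rw [Algebra.smul_def, map_mul, AlgHom.commutes, ← Algebra.smul_def]
    apply Subtype.ext
    show (ψ (r • k)) (v : XF A') = r • ((ψ k) (v : XF A'))
    rw [hp]
    rfl
  have htower := Module.finrank_mul_finrank ℝ K V
  have hVT : Module.finrank ℝ V = Module.finrank ℝ (LinearMap.range (T : X →ₗ[ℝ] X)) := by
    have e1 : V ≃ₗ[ℝ] V.map (XF A').subtype :=
      Submodule.equivMapOfInjective _ (Submodule.injective_subtype _) V
    have e2 : V.map (XF A').subtype = LinearMap.range (T : X →ₗ[ℝ] X) := by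
      rw [← map_XF_eq_range A hA hT]
      ext y
      constructor
      · rintro ⟨_, ⟨x, rfl⟩, rfl⟩
        exact ⟨(x : X), x.2, rfl⟩
      · rintro ⟨x, hx, rfl⟩
        exact ⟨Tr ⟨x, hx⟩, ⟨⟨x, hx⟩, rfl⟩, rfl⟩
    rw [e1.finrank_eq, e2]
  rw [hVT] at htower
  exact ⟨Module.finrank K V, htower.symm⟩

end Aux

/-- (i) In an L-algebra of complex type every finite-rank member has even
rank. (ii) In an L-algebra of quaternion type every finite-rank member has rank
divisible by four. -/
theorem stmt9 {X : Type*} [NormedAddCommGroup X] [NormedSpace ℝ X] [CompleteSpace X]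
    (hinf : ¬ FiniteDimensional ℝ X)
    (A : NonUnitalSubalgebra ℝ (X →L[ℝ] X))
    (hA : IsLSet (A : Set (X →L[ℝ] X))) :
    (ComplexType (A : Set (X →L[ℝ] X)) →
      ∀ T ∈ AF (A : Set (X →L[ℝ] X)), Even (Module.finrank ℝ (LinearMap.range (T : X →ₗ[ℝ] X)))) ∧
    (QuaternionType (A : Set (X →L[ℝ] X)) →
      ∀ T ∈ AF (A : Set (X →L[ℝ] X)), 4 ∣ Module.finrank ℝ (LinearMap.range (T : X →ₗ[ℝ] X))) := by
  constructor
  · rintro ⟨e⟩ T hT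
    have h := key_rank_dvd A hA ℂ e hT
    rw [Complex.finrank_real_complex] at h
    exact even_iff_two_dvd.mpr h
  · rintro ⟨e⟩ T hT
    have h := key_rank_dvd A hA (Quaternion ℝ) e hT
    rwa [Quaternion.finrank_eq_four] at h

end
end

section
/- Every L-algebra 𝒜 of complex type on an infinite-dimensional real Banach space X is contained in the algebra 𝒜_S, for some closed partial complex structure S on X. -/
open Filter Topology

noncomputable section

variable {X : Type*} [NormedAddCommGroup X] [NormedSpace ℝ X]

section Stmt13Aux

variable (A : NonUnitalSubalgebra ℝ (X →L[ℝ] X))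

lemma finiteRank_mul_left {T : X →L[ℝ] X} (S : X →L[ℝ] X) (hT : FiniteRank T) :
    FiniteRank (T * S) := by
  haveI : FiniteDimensional ℝ (LinearMap.range (T : X →ₗ[ℝ] X)) := hT
  have h : LinearMap.range ((T * S : X →L[ℝ] X) : X →ₗ[ℝ] X) ≤ LinearMap.range (T : X →ₗ[ℝ] X) := by
    rintro _ ⟨y, rfl⟩
    exact ⟨S y, rfl⟩
  exact Submodule.finiteDimensional_of_le h

lemma finiteRank_mul_right (T : X →L[ℝ] X) {S : X →L[ℝ] X} (hS : FiniteRank S) :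
    FiniteRank (T * S) := by
  haveI : FiniteDimensional ℝ (LinearMap.range (S : X →ₗ[ℝ] X)) := hS
  haveI := Module.Finite.map (LinearMap.range (S : X →ₗ[ℝ] X)) (T : X →ₗ[ℝ] X)
  have h : LinearMap.range ((T * S : X →L[ℝ] X) : X →ₗ[ℝ] X) ≤ (LinearMap.range (S : X →ₗ[ℝ] X)).map (T : X →ₗ[ℝ] X) := by
    rintro _ ⟨y, rfl⟩
    exact ⟨S y, ⟨y, rfl⟩, rfl⟩
  exact Submodule.finiteDimensional_of_le h

lemma mem_XF_of_mem {T : X →L[ℝ] X} (hT : T ∈ (A : Set (X →L[ℝ] X))) {w : X}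
    (hw : w ∈ XF (A : Set (X →L[ℝ] X))) : T w ∈ XF (A : Set (X →L[ℝ] X)) := by
  induction hw using Submodule.span_induction with
  | mem x hx =>
      obtain ⟨S, hS, x', rfl⟩ := hx
      exact Submodule.subset_span ⟨T * S, ⟨mul_mem hT hS.1, finiteRank_mul_right T hS.2⟩, x',
        rfl⟩
  | zero => simp
  | add a b _ _ ha hb => simpa using add_mem ha hb
  | smul r a _ ha => simpa using Submodule.smul_mem _ r ha

lemma exists_AF_ne_zero (htrans : IsTransitiveAlg (A : Set (X →L[ℝ] X)))
    {T0 : X →L[ℝ] X} (hT0A : T0 ∈ (A : Set (X →L[ℝ] X))) (hT0ne : T0 ≠ 0)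
    (hT0fr : FiniteRank T0) {u : X} (hu : u ≠ 0) :
    ∃ S ∈ AF (A : Set (X →L[ℝ] X)), S u ≠ 0 := by
  obtain ⟨z, hz⟩ : ∃ z, T0 z ≠ 0 := by
    by_contra hcon
    push_neg at hcon
    exact hT0ne (ContinuousLinearMap.ext fun z => by simpa using hcon z)
  have hden : ‖T0 z‖ / (‖T0‖ + 1) > 0 :=
    div_pos (norm_pos_iff.mpr hz) (by positivity)
  obtain ⟨T1, hT1, hlt⟩ := htrans u hu z _ hden
  refine ⟨T0 * T1, ⟨mul_mem hT0A hT1, finiteRank_mul_left T1 hT0fr⟩, ?_⟩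
  intro h0
  have h1 : ‖T0 z‖ = ‖T0 z - T0 (T1 u)‖ := by
    rw [show T0 (T1 u) = (T0 * T1) u from rfl, h0, sub_zero]
  have h2 : ‖T0 z - T0 (T1 u)‖ ≤ ‖T0‖ * ‖z - T1 u‖ := by
    rw [← map_sub]
    exact T0.le_opNorm _
  have hn : ‖z - T1 u‖ < ‖T0 z‖ / (‖T0‖ + 1) := by rwa [norm_sub_rev]
  have h3 : ‖T0‖ * ‖z - T1 u‖ < ‖T0 z‖ := by
    calc ‖T0‖ * ‖z - T1 u‖ ≤ ‖T0‖ * (‖T0 z‖ / (‖T0‖ + 1)) :=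
          mul_le_mul_of_nonneg_left hn.le (norm_nonneg _)
      _ < (‖T0‖ + 1) * (‖T0 z‖ / (‖T0‖ + 1)) :=
          mul_lt_mul_of_pos_right (lt_add_one _) hden
      _ = ‖T0 z‖ := by field_simp
  linarith

lemma dense_XF (htrans : IsTransitiveAlg (A : Set (X →L[ℝ] X)))
    {T0 : X →L[ℝ] X} (hT0A : T0 ∈ (A : Set (X →L[ℝ] X))) (hT0ne : T0 ≠ 0)
    (hT0fr : FiniteRank T0) :
    Dense ((XF (A : Set (X →L[ℝ] X)) : Set X)) := by
  obtain ⟨x0, hx0⟩ : ∃ x0, T0 x0 ≠ 0 := by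
    by_contra hcon
    push_neg at hcon
    exact hT0ne (ContinuousLinearMap.ext fun z => by simpa using hcon z)
  have hv0 : T0 x0 ∈ XF (A : Set (X →L[ℝ] X)) :=
    Submodule.subset_span ⟨T0, ⟨hT0A, hT0fr⟩, x0, rfl⟩
  rw [Metric.dense_iff]
  intro y r hr
  obtain ⟨T, hT, hlt⟩ := htrans (T0 x0) hx0 y r hr
  refine ⟨T (T0 x0), ?_, mem_XF_of_mem A hT hv0⟩
  rw [Metric.mem_ball, dist_eq_norm]
  exact hlt

lemma DD_comm_restrict {J : Module.End ℝ (XF (A : Set (X →L[ℝ] X)))}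
    (hJ : J ∈ DD (A : Set (X →L[ℝ] X))) {S : X →L[ℝ] X}
    (hS : S ∈ AF (A : Set (X →L[ℝ] X))) (v : XF (A : Set (X →L[ℝ] X))) :
    S ↑(J v) = ↑(J ((S : X →ₗ[ℝ] X).restrict (mapsto_XF hS) v)) := by
  have h := (Subalgebra.mem_centralizer_iff ℝ).mp hJ _ ⟨S, hS, rfl⟩
  have h2 := congrArg
    (fun f : Module.End ℝ (XF (A : Set (X →L[ℝ] X))) => ((f v : XF (A : Set (X →L[ℝ] X))) : X)) h
  simpa [Module.End.mul_apply, LinearMap.restrict_coe_apply] using h2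

lemma J_comm (htrans : IsTransitiveAlg (A : Set (X →L[ℝ] X)))
    {T0 : X →L[ℝ] X} (hT0A : T0 ∈ (A : Set (X →L[ℝ] X))) (hT0ne : T0 ≠ 0)
    (hT0fr : FiniteRank T0)
    {J : Module.End ℝ (XF (A : Set (X →L[ℝ] X)))} (hJ : J ∈ DD (A : Set (X →L[ℝ] X)))
    {T : X →L[ℝ] X} (hT : T ∈ (A : Set (X →L[ℝ] X))) (w : XF (A : Set (X →L[ℝ] X))) :
    (↑(J ⟨T ↑w, mem_XF_of_mem A hT w.2⟩) : X) = T ↑(J w) := by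
  have key : ∀ S ∈ AF (A : Set (X →L[ℝ] X)),
      S (T ↑(J w)) = S ↑(J ⟨T ↑w, mem_XF_of_mem A hT w.2⟩) := by
    intro S hS
    have hST : S * T ∈ AF (A : Set (X →L[ℝ] X)) :=
      ⟨mul_mem hS.1 hT, finiteRank_mul_left T hS.2⟩
    have h1 := DD_comm_restrict A hJ hST w
    have h2 := DD_comm_restrict A hJ hS (⟨T ↑w, mem_XF_of_mem A hT w.2⟩)
    have h3 : ((S * T : X →L[ℝ] X) : X →ₗ[ℝ] X).restrict (mapsto_XF hST) w
        = ((S : X →ₗ[ℝ] X).restrict (mapsto_XF hS)) ⟨T ↑w, mem_XF_of_mem A hT w.2⟩ := by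
      apply Subtype.ext
      simp [LinearMap.restrict_coe_apply]
    calc S (T ↑(J w)) = (S * T) ↑(J w) := rfl
      _ = ↑(J (((S * T : X →L[ℝ] X) : X →ₗ[ℝ] X).restrict (mapsto_XF hST) w)) := h1
      _ = ↑(J (((S : X →ₗ[ℝ] X).restrict (mapsto_XF hS)) ⟨T ↑w, mem_XF_of_mem A hT w.2⟩)) := by
          rw [h3]
      _ = S ↑(J ⟨T ↑w, mem_XF_of_mem A hT w.2⟩) := h2.symm
  by_contra hne
  have hu : T ↑(J w) - ↑(J ⟨T ↑w, mem_XF_of_mem A hT w.2⟩) ≠ 0 :=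
    sub_ne_zero.mpr (fun hcon => hne hcon.symm)
  obtain ⟨S, hS, hSu⟩ := exists_AF_ne_zero A htrans hT0A hT0ne hT0fr hu
  apply hSu
  rw [map_sub, key S hS, sub_self]

end Stmt13Aux

set_option maxHeartbeats 1000000 in
/-- Every L-algebra of complex type is contained in `𝒜_S` for some closed
partial complex structure `S`. -/
theorem stmt13 {X : Type*} [NormedAddCommGroup X] [NormedSpace ℝ X] [CompleteSpace X]
    (hinf : ¬ FiniteDimensional ℝ X)
    (A : NonUnitalSubalgebra ℝ (X →L[ℝ] X))
    (hA : IsLSet (A : Set (X →L[ℝ] X)))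
    (hC : ComplexType (A : Set (X →L[ℝ] X))) :
    ∃ S : PCS X, PCSClosed S ∧ (A : Set (X →L[ℝ] X)) ⊆ AlgS S := by
  classical
  obtain ⟨htrans, T0, hT0A, hT0ne, hT0fr⟩ := hA
  obtain ⟨e⟩ := hC
  -- the complex structure on `X^F`
  obtain ⟨J, hJmem, hJJ⟩ : ∃ J : Module.End ℝ (XF (A : Set (X →L[ℝ] X))),
      J ∈ DD (A : Set (X →L[ℝ] X)) ∧ ∀ v : XF (A : Set (X →L[ℝ] X)), J (J v) = -v := by
    refine ⟨(e.symm Complex.I : DD (A : Set (X →L[ℝ] X))), (e.symm Complex.I).2, ?_⟩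
    intro v
    have h1 : e.symm Complex.I * e.symm Complex.I = -1 := by
      rw [show e.symm Complex.I * e.symm Complex.I = e.symm (Complex.I * Complex.I) from
        (map_mul e.symm _ _).symm, Complex.I_mul_I, map_neg, map_one]
    have h3 := congrArg
      (fun x : DD (A : Set (X →L[ℝ] X)) => (x : Module.End ℝ (XF (A : Set (X →L[ℝ] X))))) h1
    simp only [MulMemClass.coe_mul] at h3
    have h4 := congrArg (fun F : Module.End ℝ (XF (A : Set (X →L[ℝ] X))) => F v) h3
    simp only [Module.End.mul_apply] at h4
    rw [h4]
    rw [show ((-1 : DD (A : Set (X →L[ℝ] X))) : Module.End ℝ (XF (A : Set (X →L[ℝ] X))))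
      = -1 by push_cast; ring]
    simp
  have hcomm : ∀ (T : X →L[ℝ] X) (hT : T ∈ (A : Set (X →L[ℝ] X)))
      (w : XF (A : Set (X →L[ℝ] X))),
      (↑(J ⟨T ↑w, mem_XF_of_mem A hT w.2⟩) : X) = T ↑(J w) :=
    fun T hT w => J_comm A htrans hT0A hT0ne hT0fr hJmem hT w
  -- the graph of `J` and its closure
  let L : XF (A : Set (X →L[ℝ] X)) →ₗ[ℝ] X × X :=
    LinearMap.prod (XF (A : Set (X →L[ℝ] X))).subtype
      ((XF (A : Set (X →L[ℝ] X))).subtype ∘ₗ J)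
  let G : Submodule ℝ (X × X) := (LinearMap.range L).topologicalClosure
  have hGc : (G : Set (X × X)) = closure (LinearMap.range L : Set (X × X)) :=
    Submodule.topologicalClosure_coe _
  have hGclosed : IsClosed (G : Set (X × X)) := Submodule.isClosed_topologicalClosure _
  have hsubG : ∀ w : XF (A : Set (X →L[ℝ] X)), ((w : X), (J w : X)) ∈ G := fun w =>
    Submodule.le_topologicalClosure _ ⟨w, rfl⟩
  -- invariance of `G` under `T ⊕ T` for `T ∈ A`
  have hTmaps : ∀ T, T ∈ (A : Set (X →L[ℝ] X)) → ∀ p ∈ G, (T.prodMap T) p ∈ G := by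
    intro T hT p hp
    have hmapsto : Set.MapsTo (T.prodMap T) (LinearMap.range L : Set (X × X))
        (LinearMap.range L : Set (X × X)) := by
      rintro _ ⟨w, rfl⟩
      refine ⟨⟨T ↑w, mem_XF_of_mem A hT w.2⟩, ?_⟩
      have hc := hcomm T hT w
      refine Prod.ext rfl ?_
      exact hc
    have hp' : p ∈ closure (LinearMap.range L : Set (X × X)) := by rw [← hGc]; exact hp
    have h9 := map_mem_closure (T.prodMap T).continuous hp' hmapsto
    show _ ∈ (G : Set (X × X))
    rw [hGc]
    exact h9
  -- invariance of `G` under `σ : (x, y) ↦ (y, -x)`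
  let σ : (X × X) →L[ℝ] (X × X) :=
    (ContinuousLinearMap.snd ℝ X X).prod (-(ContinuousLinearMap.fst ℝ X X))
  have hσG : ∀ p ∈ G, σ p ∈ G := by
    intro p hp
    have hmapsto : Set.MapsTo σ (LinearMap.range L : Set (X × X))
        (LinearMap.range L : Set (X × X)) := by
      rintro _ ⟨w, rfl⟩
      refine ⟨J w, ?_⟩
      refine Prod.ext rfl ?_
      show ((J (J w) : XF (A : Set (X →L[ℝ] X))) : X) = -(w : X)
      rw [hJJ w]
      rfl
    have hp' : p ∈ closure (LinearMap.range L : Set (X × X)) := by rw [← hGc]; exact hp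
    have h9 := map_mem_closure σ.continuous hp' hmapsto
    show _ ∈ (G : Set (X × X))
    rw [hGc]
    exact h9
  -- the separating functionals
  obtain ⟨x0, hx0⟩ : ∃ x0, T0 x0 ≠ 0 := by
    by_contra hcon
    push_neg at hcon
    exact hT0ne (ContinuousLinearMap.ext fun z => by simpa using hcon z)
  obtain ⟨f, hf1, hf2⟩ := exists_dual_vector ℝ (T0 x0) (norm_ne_zero_iff.mpr hx0)
  let g : X →L[ℝ] ℝ := f.comp T0
  have hgx0 : g x0 ≠ 0 := by
    show f (T0 x0) ≠ 0
    rw [hf2]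
    exact norm_ne_zero_iff.mpr hx0
  haveI hW0fd : FiniteDimensional ℝ (LinearMap.range (T0 : X →ₗ[ℝ] X)) := hT0fr
  have hW0le : LinearMap.range (T0 : X →ₗ[ℝ] X) ≤ XF (A : Set (X →L[ℝ] X)) := by
    rintro _ ⟨x, rfl⟩
    exact Submodule.subset_span ⟨T0, ⟨hT0A, hT0fr⟩, x, rfl⟩
  let JW : LinearMap.range (T0 : X →ₗ[ℝ] X) →ₗ[ℝ] X :=
    (XF (A : Set (X →L[ℝ] X))).subtype ∘ₗ (J ∘ₗ Submodule.inclusion hW0le)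
  let JWc : LinearMap.range (T0 : X →ₗ[ℝ] X) →L[ℝ] X := JW.toContinuousLinearMap
  let h : X →L[ℝ] ℝ :=
    f.comp (JWc.comp (T0.codRestrict (LinearMap.range (T0 : X →ₗ[ℝ] X))
      (fun x => LinearMap.mem_range_self (T0 : X →ₗ[ℝ] X) x)))
  -- on `G`, `g ∘ snd = h ∘ fst`
  have hGker : ∀ p ∈ G, g p.2 = h p.1 := by
    have hclosed : IsClosed {p : X × X | g p.2 = h p.1} :=
      isClosed_eq (g.continuous.comp continuous_snd) (h.continuous.comp continuous_fst)
    have hsub : (LinearMap.range L : Set (X × X)) ⊆ {p : X × X | g p.2 = h p.1} := by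
      rintro _ ⟨w, rfl⟩
      show g ((J w : XF (A : Set (X →L[ℝ] X))) : X) = h (w : X)
      have hc := hcomm T0 hT0A w
      calc g ((J w : XF (A : Set (X →L[ℝ] X))) : X) = f (T0 ↑(J w)) := rfl
        _ = f ↑(J ⟨T0 ↑w, mem_XF_of_mem A hT0A w.2⟩) := by rw [hc]
        _ = h (w : X) := rfl
    intro p hp
    have hp' : p ∈ closure (LinearMap.range L : Set (X × X)) := by rw [← hGc]; exact hp
    exact closure_minimal hsub hclosed hp'
  -- `G` is a graph
  have huniq : ∀ y : X, ((0 : X), y) ∈ G → y = 0 := by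
    intro y hy
    by_contra hyne
    have hgTy : ∀ T, T ∈ (A : Set (X →L[ℝ] X)) → g (T y) = 0 := by
      intro T hT
      have h1 := hTmaps T hT _ hy
      have h2 := hGker _ h1
      have h3 : (T.prodMap T) ((0 : X), y) = ((0 : X), T y) := by
        refine Prod.ext ?_ rfl
        show T 0 = 0
        exact map_zero T
      rw [h3] at h2
      have h4 : h (0 : X) = 0 := map_zero h
      rw [h4] at h2
      exact h2
    have hpos : |g x0| / (‖g‖ + 1) > 0 := div_pos (abs_pos.mpr hgx0) (by positivity)
    obtain ⟨T, hT, hlt⟩ := htrans y hyne x0 _ hpos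
    have h0 : g (T y) = 0 := hgTy T hT
    have hle : |g (x0 - T y)| ≤ ‖g‖ * ‖x0 - T y‖ := by
      have := g.le_opNorm (x0 - T y)
      simpa [Real.norm_eq_abs] using this
    have hn : ‖x0 - T y‖ < |g x0| / (‖g‖ + 1) := by rwa [norm_sub_rev]
    have hcontr : |g x0| < |g x0| := by
      calc |g x0| = |g (x0 - T y)| := by rw [map_sub, h0, sub_zero]
        _ ≤ ‖g‖ * ‖x0 - T y‖ := hle
        _ ≤ ‖g‖ * (|g x0| / (‖g‖ + 1)) := mul_le_mul_of_nonneg_left hn.le (norm_nonneg _)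
        _ < (‖g‖ + 1) * (|g x0| / (‖g‖ + 1)) := mul_lt_mul_of_pos_right (lt_add_one _) hpos
        _ = |g x0| := by field_simp
    exact absurd hcontr (lt_irrefl _)
  -- the first projection is injective on `G`
  let e1 : G →ₗ[ℝ] X := (LinearMap.fst ℝ X X) ∘ₗ G.subtype
  have hinj : Function.Injective e1 := by
    intro p q hpq
    have hmem : ((0 : X), ((p : X × X).2 - (q : X × X).2)) ∈ G := by
      have hsm := sub_mem p.2 q.2
      have heq : (p : X × X) - (q : X × X) = ((0 : X), (p : X × X).2 - (q : X × X).2) := by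
        refine Prod.ext ?_ rfl
        show (p : X × X).1 - (q : X × X).1 = 0
        rw [show (p : X × X).1 = e1 p from rfl, show (q : X × X).1 = e1 q from rfl, hpq,
          sub_self]
      rwa [heq] at hsm
    have hz := huniq _ hmem
    apply Subtype.ext
    refine Prod.ext ?_ ?_
    · exact hpq
    · exact sub_eq_zero.mp hz
  let eqv := LinearEquiv.ofInjective e1 hinj
  let D : Submodule ℝ X := LinearMap.range e1
  let ψ : D →ₗ[ℝ] X := (LinearMap.snd ℝ X X) ∘ₗ (G.subtype ∘ₗ eqv.symm.toLinearMap)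
  have hfst : ∀ x : D, ((eqv.symm x : G) : X × X).1 = (x : X) := by
    intro x
    calc ((eqv.symm x : G) : X × X).1 = e1 (eqv.symm x) := rfl
      _ = ↑(eqv (eqv.symm x)) := (LinearEquiv.ofInjective_apply e1 (h := hinj) _).symm
      _ = ↑x := by rw [eqv.apply_symm_apply]
  have hpair : ∀ x : D, ((x : X), ψ x) ∈ G := by
    intro x
    have h1 : ((eqv.symm x : G) : X × X) ∈ G := (eqv.symm x).2
    have h2 : ((x : X), ψ x) = ((eqv.symm x : G) : X × X) := by
      refine Prod.ext ?_ rfl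
      exact (hfst x).symm
    rwa [h2]
  have hψuniq : ∀ (x : D) (y : X), ((x : X), y) ∈ G → y = ψ x := by
    intro x y hy
    have h4 : e1 ⟨((x : X), y), hy⟩ = e1 (eqv.symm x) := by
      show ((x : X), y).1 = ((eqv.symm x : G) : X × X).1
      rw [hfst x]
    have h5 := hinj h4
    have h6 := congrArg (fun p : G => ((p : X × X)).2) h5
    exact h6
  have hψmem : ∀ x : D, ψ x ∈ D := by
    intro x
    have h5 := hσG _ (hpair x)
    exact ⟨⟨_, h5⟩, rfl⟩
  let Smap : D →ₗ[ℝ] D := LinearMap.codRestrict D ψ hψmem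
  have hanti : ∀ x : D, Smap (Smap x) = -x := by
    intro x
    apply Subtype.ext
    show ψ (Smap x) = ((-x : D) : X)
    have h5 := hσG _ (hpair x)
    have h6 : (((Smap x : D) : X), -(x : X)) ∈ G := h5
    have h7 := hψuniq (Smap x) (-(x : X)) h6
    rw [← h7]
    rfl
  have hDdense : Dense (D : Set X) := by
    have hXAD : ((XF (A : Set (X →L[ℝ] X))) : Set X) ⊆ (D : Set X) := by
      intro v hv
      exact ⟨⟨_, hsubG ⟨v, hv⟩⟩, rfl⟩
    exact (dense_XF A htrans hT0A hT0ne hT0fr).mono hXAD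
  refine ⟨⟨D, hDdense, Smap, hanti⟩, ?_, ?_⟩
  · -- closedness
    show IsClosed (Set.range fun x : D => ((x : X), ((Smap x : D) : X)))
    have hrange : (Set.range fun x : D => ((x : X), ((Smap x : D) : X))) = (G : Set (X × X)) := by
      apply Set.Subset.antisymm
      · rintro _ ⟨x, rfl⟩
        exact hpair x
      · rintro p hp
        have hm : p.1 ∈ D := ⟨⟨p, hp⟩, rfl⟩
        refine ⟨⟨p.1, hm⟩, ?_⟩
        have hmemp : (((⟨p.1, hm⟩ : D) : X), p.2) ∈ G := hp
        have h8 : p.2 = ψ ⟨p.1, hm⟩ := hψuniq _ _ hmemp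
        refine Prod.ext rfl ?_
        exact h8.symm
    rw [hrange]
    exact hGclosed
  · -- `A ⊆ 𝒜_S`
    intro T hT
    intro x
    have hTp : ((T (x : X)), T (ψ x)) ∈ G := hTmaps T hT _ (hpair x)
    have hmem : T (x : X) ∈ D := ⟨⟨_, hTp⟩, rfl⟩
    refine ⟨⟨T (x : X), hmem⟩, rfl, ?_⟩
    have h7 : T (ψ x) = ψ ⟨T (x : X), hmem⟩ := hψuniq _ _ hTp
    show T ((Smap x : D) : X) = ((Smap ⟨T (x : X), hmem⟩ : D) : X)
    exact h7

end
end

section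
/- Let π be a representation of the quaternion group G_ℍ by linear bijections of a dense linear subspace E of an infinite-dimensional real Banach space X, with π(1) = id_E and π(−1) = −id_E. If π is closed and regular, then 𝒜_π is a Lomonosov algebra of quaternion type on X: 𝒜_π is closed in the strong operator topology, transitive, contains a nonzero finite-rank operator, and is of quaternion type. -/
open Filter Topology

noncomputable section

variable {X : Type*} [NormedAddCommGroup X] [NormedSpace ℝ X]

namespace Stmt16

open QuaternionGroup

variable {X : Type*} [NormedAddCommGroup X] [NormedSpace ℝ X]

/-- generators -/
def gI : QuaternionGroup 2 := a 1
def gJ : QuaternionGroup 2 := xa 0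
def gK : QuaternionGroup 2 := xa 3
def gN : QuaternionGroup 2 := a 2

variable (ρ : QRep X)

lemma pi_a0 : ρ.pi (a 0) = 1 := by
  rw [show (a 0 : QuaternionGroup 2) = 1 from (QuaternionGroup.one_def).symm, ρ.pi_one]

lemma pi_neg (g : QuaternionGroup 2) : ρ.pi (gN * g) = - ρ.pi g := by
  rw [ρ.pi_mul, gN, ρ.pi_neg_one]; exact neg_one_mul (ρ.pi g)

lemma hII : ρ.pi gI * ρ.pi gI = -1 := by
  rw [← ρ.pi_mul, show gI * gI = (a 2 : QuaternionGroup 2) from by decide, ρ.pi_neg_one]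
lemma hJJ : ρ.pi gJ * ρ.pi gJ = -1 := by
  rw [← ρ.pi_mul, show gJ * gJ = (a 2 : QuaternionGroup 2) from by decide, ρ.pi_neg_one]
lemma hKK : ρ.pi gK * ρ.pi gK = -1 := by
  rw [← ρ.pi_mul, show gK * gK = (a 2 : QuaternionGroup 2) from by decide, ρ.pi_neg_one]
lemma hIJ : ρ.pi gI * ρ.pi gJ = ρ.pi gK := by
  rw [← ρ.pi_mul, show gI * gJ = gK from by decide]
lemma hJI : ρ.pi gJ * ρ.pi gI = -ρ.pi gK := by
  rw [← ρ.pi_mul, show gJ * gI = gN * gK from by decide, pi_neg]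
lemma hJK : ρ.pi gJ * ρ.pi gK = ρ.pi gI := by
  rw [← ρ.pi_mul, show gJ * gK = gI from by decide]
lemma hKJ : ρ.pi gK * ρ.pi gJ = -ρ.pi gI := by
  rw [← ρ.pi_mul, show gK * gJ = gN * gI from by decide, pi_neg]
lemma hKI : ρ.pi gK * ρ.pi gI = ρ.pi gJ := by
  rw [← ρ.pi_mul, show gK * gI = gJ from by decide]
lemma hIK : ρ.pi gI * ρ.pi gK = -ρ.pi gJ := by
  rw [← ρ.pi_mul, show gI * gK = gN * gJ from by decide, pi_neg]

/-- the algebra map `ℍ → End E`. -/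
def Pimap (q : Quaternion ℝ) : Module.End ℝ ρ.domain :=
  q.re • 1 + q.imI • ρ.pi gI + q.imJ • ρ.pi gJ + q.imK • ρ.pi gK

lemma Pimap_one : Pimap ρ 1 = 1 := by
  simp [Pimap, Quaternion.re_one, Quaternion.imI_one, Quaternion.imJ_one, Quaternion.imK_one]

lemma Pimap_add (q r : Quaternion ℝ) : Pimap ρ (q + r) = Pimap ρ q + Pimap ρ r := by
  simp only [Pimap, Quaternion.re_add, Quaternion.imI_add, Quaternion.imJ_add,
    Quaternion.imK_add, add_smul]
  abel

lemma Pimap_smul (c : ℝ) (q : Quaternion ℝ) : Pimap ρ (c • q) = c • Pimap ρ q := by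
  simp only [Pimap, Quaternion.re_smul, Quaternion.imI_smul, Quaternion.imJ_smul,
    Quaternion.imK_smul, smul_eq_mul, mul_smul, smul_add]

lemma Pimap_mul (q r : Quaternion ℝ) : Pimap ρ (q * r) = Pimap ρ q * Pimap ρ r := by
  simp only [Pimap, Quaternion.re_mul, Quaternion.imI_mul, Quaternion.imJ_mul,
    Quaternion.imK_mul, add_mul, mul_add, smul_mul_assoc, mul_smul_comm, one_mul, mul_one,
    hII, hJJ, hKK, hIJ, hJI, hJK, hKJ, hKI, hIK, sub_smul, add_smul]
  module

lemma Pimap_inv_cancel {q : Quaternion ℝ} (hq : q ≠ 0) (w : ρ.domain) :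
    Pimap ρ q (Pimap ρ q⁻¹ w) = w := by
  have : Pimap ρ q * Pimap ρ q⁻¹ = 1 := by
    rw [← Pimap_mul, mul_inv_cancel₀ hq, Pimap_one]
  calc Pimap ρ q (Pimap ρ q⁻¹ w) = (Pimap ρ q * Pimap ρ q⁻¹) w := rfl
  _ = w := by rw [this]; rfl

end Stmt16

namespace Stmt16

open QuaternionGroup

variable {X : Type*} [NormedAddCommGroup X] [NormedSpace ℝ X]

/-- the set `E*` of functionals bounded on the orbit. -/
abbrev EstarSet (ρ : QRep X) : Set (StrongDual ℝ X) :=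
  {f : StrongDual ℝ X |
      ∃ C > 0, ∀ g : QuaternionGroup 2, ∀ x : ρ.domain, |f (ρ.pi g x : X)| ≤ C * ‖(x : X)‖}

variable (ρ : QRep X)

lemma Estar_zero_mem : (0 : StrongDual ℝ X) ∈ EstarSet ρ := by
  refine ⟨1, one_pos, fun g x => by simp [norm_nonneg]⟩

lemma Estar_add_mem {f f' : StrongDual ℝ X} (hf : f ∈ EstarSet ρ) (hf' : f' ∈ EstarSet ρ) :
    f + f' ∈ EstarSet ρ := by
  obtain ⟨C, hC, hb⟩ := hf; obtain ⟨C', hC', hb'⟩ := hf'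
  refine ⟨C + C', by linarith, fun g x => ?_⟩
  calc |(f + f') (ρ.pi g x : X)| ≤ |f (ρ.pi g x : X)| + |f' (ρ.pi g x : X)| := by
        simpa using abs_add_le _ _
  _ ≤ C * ‖(x : X)‖ + C' * ‖(x : X)‖ := add_le_add (hb g x) (hb' g x)
  _ = (C + C') * ‖(x : X)‖ := by ring

lemma Estar_smul_mem (c : ℝ) {f : StrongDual ℝ X} (hf : f ∈ EstarSet ρ) :
    c • f ∈ EstarSet ρ := by
  obtain ⟨C, hC, hb⟩ := hf
  refine ⟨|c| * C + 1, by positivity, fun g x => ?_⟩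
  have h1 : |(c • f) (ρ.pi g x : X)| = |c| * |f (ρ.pi g x : X)| := by
    simp [abs_mul]
  rw [h1]
  have h2 : |c| * |f (ρ.pi g x : X)| ≤ |c| * (C * ‖(x : X)‖) :=
    mul_le_mul_of_nonneg_left (hb g x) (abs_nonneg c)
  have h3 : ‖(x:X)‖ ≥ 0 := norm_nonneg _
  nlinarith

/-- `E*` as a submodule of the dual. -/
def EstarSub : Submodule ℝ (StrongDual ℝ X) where
  carrier := EstarSet ρ
  add_mem' := Estar_add_mem ρ
  zero_mem' := Estar_zero_mem ρ
  smul_mem' := Estar_smul_mem ρ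

lemma denseRange_subtypeL : DenseRange (ρ.domain.subtypeL) := by
  have h : Set.range (ρ.domain.subtypeL) = (ρ.domain : Set X) := by
    ext x
    constructor
    · rintro ⟨y, rfl⟩; exact y.2
    · intro hx; exact ⟨⟨x, hx⟩, rfl⟩
  rw [DenseRange, h]; exact ρ.dense'

lemma isUniformInducing_subtypeL : IsUniformInducing (ρ.domain.subtypeL) := by
  have : Isometry (ρ.domain.subtypeL) := fun x y => rfl
  exact this.isUniformInducing

/-- the continuous functional `e ↦ f (π g e)` on the domain. -/
def fg (f : StrongDual ℝ X) (C : ℝ)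
    (hC : ∀ g : QuaternionGroup 2, ∀ x : ρ.domain, |f (ρ.pi g x : X)| ≤ C * ‖(x : X)‖)
    (g : QuaternionGroup 2) : ρ.domain →L[ℝ] ℝ :=
  LinearMap.mkContinuous
    { toFun := fun e => f (ρ.pi g e : X)
      map_add' := by intro e e'; simp only [map_add, Submodule.coe_add]
      map_smul' := by intro c e; simp only [map_smul, Submodule.coe_smul, RingHom.id_apply,
        smul_eq_mul] }
    C (fun e => by simpa [Real.norm_eq_abs] using hC g e)

/-- the extension `F_g` of `f ∘ π(g)` to `X`. -/
def Fg [CompleteSpace X] (f : StrongDual ℝ X) (C : ℝ)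
    (hC : ∀ g : QuaternionGroup 2, ∀ x : ρ.domain, |f (ρ.pi g x : X)| ≤ C * ‖(x : X)‖)
    (g : QuaternionGroup 2) : StrongDual ℝ X :=
  (fg ρ f C hC g).extend ρ.domain.subtypeL

variable [CompleteSpace X]

lemma Fg_apply (f : StrongDual ℝ X) (C : ℝ) (hC) (g : QuaternionGroup 2) (e : ρ.domain) :
    Fg ρ f C hC g (e : X) = f (ρ.pi g e : X) :=
  ContinuousLinearMap.extend_eq _ (denseRange_subtypeL ρ) (isUniformInducing_subtypeL ρ) _

lemma Fg_a0 (f : StrongDual ℝ X) (C : ℝ) (hC) : Fg ρ f C hC (a 0) = f := by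
  refine ContinuousLinearMap.extend_unique _ (denseRange_subtypeL ρ) (isUniformInducing_subtypeL ρ) _ ?_
  ext e
  simp [fg, pi_a0, ρ.pi_one, Module.End.one_apply, LinearMap.mkContinuous_apply]

lemma Fg_a2 (f : StrongDual ℝ X) (C : ℝ) (hC) : Fg ρ f C hC (a 2) = -f := by
  refine ContinuousLinearMap.extend_unique _ (denseRange_subtypeL ρ) (isUniformInducing_subtypeL ρ) _ ?_
  ext e
  simp [fg, ρ.pi_neg_one, LinearMap.mkContinuous_apply]

end Stmt16

namespace Stmt16

open QuaternionGroup

variable {X : Type*} [NormedAddCommGroup X] [NormedSpace ℝ X] [CompleteSpace X]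
variable (ρ : QRep X)

/-- the averaged finite-rank operator `T_{f,u}`. -/
def Top (f : StrongDual ℝ X) (C : ℝ)
    (hC : ∀ g : QuaternionGroup 2, ∀ x : ρ.domain, |f (ρ.pi g x : X)| ≤ C * ‖(x : X)‖)
    (u : ρ.domain) : X →L[ℝ] X :=
  ∑ g : QuaternionGroup 2, (Fg ρ f C hC g).smulRight ((ρ.pi g⁻¹ u : X))

lemma Top_apply (f : StrongDual ℝ X) (C : ℝ) (hC) (u : ρ.domain) (x : X) :
    Top ρ f C hC u x = ∑ g : QuaternionGroup 2, Fg ρ f C hC g x • ((ρ.pi g⁻¹ u : X)) := by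
  simp [Top, ContinuousLinearMap.sum_apply]

lemma Top_apply_coe (f : StrongDual ℝ X) (C : ℝ) (hC) (u : ρ.domain) (e : ρ.domain) :
    Top ρ f C hC u (e : X) =
      ((∑ g : QuaternionGroup 2, f (ρ.pi g e : X) • ρ.pi g⁻¹ u : ρ.domain) : X) := by
  rw [Top_apply]
  push_cast
  exact Finset.sum_congr rfl fun g _ => by rw [Fg_apply]

lemma Top_mem_AlgPi (f : StrongDual ℝ X) (C : ℝ) (hC) (u : ρ.domain) :
    Top ρ f C hC u ∈ AlgPi ρ := by
  intro x
  refine ⟨∑ g : QuaternionGroup 2, f (ρ.pi g x : X) • ρ.pi g⁻¹ u, (Top_apply_coe ρ f C hC u x).symm, ?_⟩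
  intro h
  rw [Top_apply_coe]
  congr 1
  have hre : ∀ (g₁ g₂ : QuaternionGroup 2) (v : ρ.domain),
      ρ.pi g₁ (ρ.pi g₂ v) = ρ.pi (g₁ * g₂) v := by
    intro g₁ g₂ v; rw [ρ.pi_mul]; rfl
  rw [map_sum]
  refine Fintype.sum_equiv (Equiv.mulRight h) _ _ ?_
  intro g
  simp only [Equiv.coe_mulRight, map_smul]
  rw [hre g h x, hre h (g*h)⁻¹ u, show h * (g*h)⁻¹ = g⁻¹ by group]
lemma Top_finiteRank (f : StrongDual ℝ X) (C : ℝ) (hC) (u : ρ.domain) :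
    FiniteRank (Top ρ f C hC u) := by
  have hle : LinearMap.range (Top ρ f C hC u : X →ₗ[ℝ] X) ≤
      Submodule.span ℝ (Set.range fun g : QuaternionGroup 2 => ((ρ.pi g⁻¹ u : X))) := by
    rintro y ⟨x, rfl⟩
    rw [ContinuousLinearMap.coe_coe, Top_apply]
    exact Submodule.sum_mem _ fun g _ => Submodule.smul_mem _ _
      (Submodule.subset_span ⟨g, rfl⟩)
  have : FiniteDimensional ℝ
      (Submodule.span ℝ (Set.range fun g : QuaternionGroup 2 => ((ρ.pi g⁻¹ u : X)))) :=
    FiniteDimensional.span_of_finite ℝ (Set.finite_range _)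
  exact Submodule.finiteDimensional_of_le hle

omit [CompleteSpace X] in
/-- the key summation identity. -/
lemma sum_smul_pi_inv (c : QuaternionGroup 2 → ℝ) (w : ρ.domain) :
    ∑ g : QuaternionGroup 2, c g • ρ.pi g⁻¹ w =
      Pimap ρ ⟨c (a 0) - c (a 2), c (a 3) - c (a 1), c (xa 2) - c (xa 0), c (xa 1) - c (xa 3)⟩ w := by
  have huniv : (Finset.univ : Finset (QuaternionGroup 2)) =
      {a 0, a 1, a 2, a 3, xa 0, xa 1, xa 2, xa 3} := by decide
  rw [huniv, Finset.sum_insert (by decide), Finset.sum_insert (by decide),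
    Finset.sum_insert (by decide), Finset.sum_insert (by decide), Finset.sum_insert (by decide),
    Finset.sum_insert (by decide), Finset.sum_insert (by decide), Finset.sum_singleton]
  have e0 : ((a 0 : QuaternionGroup 2))⁻¹ = a 0 := by decide
  have e1 : ((a 1 : QuaternionGroup 2))⁻¹ = gN * gI := by decide
  have e2 : ((a 2 : QuaternionGroup 2))⁻¹ = a 2 := by decide
  have e3 : ((a 3 : QuaternionGroup 2))⁻¹ = gI := by decide
  have e4 : ((xa 0 : QuaternionGroup 2))⁻¹ = gN * gJ := by decide
  have e5 : ((xa 1 : QuaternionGroup 2))⁻¹ = gK := by decide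
  have e6 : ((xa 2 : QuaternionGroup 2))⁻¹ = gJ := by decide
  have e7 : ((xa 3 : QuaternionGroup 2))⁻¹ = gN * gK := by decide
  rw [e0, e1, e2, e3, e4, e5, e6, e7, pi_a0, ρ.pi_neg_one, pi_neg, pi_neg, pi_neg]
  simp only [Pimap, LinearMap.add_apply, LinearMap.smul_apply, LinearMap.neg_apply,
    Module.End.one_apply]
  module

end Stmt16

namespace Stmt16

open QuaternionGroup

variable {X : Type*} [NormedAddCommGroup X] [NormedSpace ℝ X]
variable (ρ : QRep X)

/-- Lemma A : E* separates points. -/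
lemma exists_estar [CompleteSpace X] (hreg : QRepRegular ρ) {x : X} (hx : x ≠ 0) :
    ∃ f ∈ EstarSet ρ, f x ≠ 0 := by
  by_contra hcon
  push_neg at hcon
  apply hx
  have hdense : Dense ((StrongDual.toWeakDual) '' EstarSet ρ) := hreg
  have hclosed : IsClosed {φ : WeakDual ℝ X | φ x = 0} :=
    isClosed_eq (WeakDual.eval_continuous x) continuous_const
  have hsub : (StrongDual.toWeakDual) '' EstarSet ρ ⊆ {φ : WeakDual ℝ X | φ x = 0} := by
    rintro φ ⟨f, hf, rfl⟩
    exact hcon f hf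
  have hall : ∀ φ : WeakDual ℝ X, φ x = 0 := by
    intro φ
    have : φ ∈ closure ((StrongDual.toWeakDual) '' EstarSet ρ) := by
      rw [hdense.closure_eq]; trivial
    exact (hclosed.closure_subset_iff.2 hsub) this
  apply NormedSpace.eq_zero_of_forall_dual_eq_zero ℝ
  intro f
  exact hall (StrongDual.toWeakDual f)

/-- Lemma B : E* achieves arbitrary values on independent families. -/
lemma exists_estar_dual [CompleteSpace X] (hreg : QRepRegular ρ) {m : ℕ} {v : Fin m → X}
    (hv : LinearIndependent ℝ v) (t : Fin m → ℝ) :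
    ∃ f ∈ EstarSet ρ, ∀ i, f (v i) = t i := by
  classical
  set L : (StrongDual ℝ X) →ₗ[ℝ] (Fin m → ℝ) :=
    { toFun := fun f i => f (v i)
      map_add' := fun f g => by ext i; simp
      map_smul' := fun c f => by ext i; simp } with hL
  set W : Submodule ℝ (Fin m → ℝ) := (EstarSub ρ).map L with hW
  have hWtop : W = ⊤ := by
    by_contra hne
    obtain ⟨t₀, ht₀⟩ : ∃ t₀, t₀ ∉ W := by
      by_contra hall; push_neg at hall
      exact hne (Submodule.eq_top_iff'.2 hall)
    have hq : W.mkQ t₀ ≠ 0 := by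
      simpa [Submodule.Quotient.mk_eq_zero] using ht₀
    obtain ⟨φ, hφ⟩ : ∃ φ : Module.Dual ℝ ((Fin m → ℝ) ⧸ W), φ (W.mkQ t₀) ≠ 0 := by
      by_contra hc
      push_neg at hc
      exact hq ((Module.forall_dual_apply_eq_zero_iff ℝ _).1 hc)
    set ψ : Module.Dual ℝ (Fin m → ℝ) := φ ∘ₗ W.mkQ with hψ
    have hψW : ∀ w ∈ W, ψ w = 0 := by
      intro w hw
      have h0 : W.mkQ w = 0 := by
        rw [Submodule.mkQ_apply]; exact (Submodule.Quotient.mk_eq_zero W).2 hw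
      simp only [hψ, LinearMap.comp_apply, h0, map_zero]
    set c : Fin m → ℝ := fun i => ψ (fun j => if i = j then 1 else 0) with hc
    have hψeq : ∀ u : Fin m → ℝ, ψ u = ∑ i, u i * c i := by
      intro u
      rw [LinearMap.pi_apply_eq_sum_univ ψ u]
      exact Finset.sum_congr rfl fun i _ => by rw [hc, smul_eq_mul]
    set z : X := ∑ i, c i • v i with hz
    have hz0 : ∀ f ∈ EstarSet ρ, f z = 0 := by
      intro f hf
      have h1 : ψ (L f) = 0 := hψW _ (Submodule.mem_map_of_mem hf)
      rw [hψeq] at h1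
      simp only [hz, map_sum, map_smul]
      rw [← h1]; exact Finset.sum_congr rfl fun i _ => by rw [smul_eq_mul, mul_comm]; rfl
    have hzne : z ≠ 0 := by
      intro hzz
      have hcz : ∀ i, c i = 0 := by
        have := linearIndependent_iff'.1 hv Finset.univ c (by rw [← hz]; exact hzz)
        intro i; exact this i (Finset.mem_univ i)
      apply hφ
      have hψ0 : ψ t₀ = 0 := by rw [hψeq]; simp [hcz]
      simpa [hψ] using hψ0
    obtain ⟨f, hf, hfz⟩ := exists_estar ρ hreg hzne
    exact hfz (hz0 f hf)
  have : t ∈ W := hWtop ▸ Submodule.mem_top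
  obtain ⟨f, hf, hft⟩ := Submodule.mem_map.1 this
  exact ⟨f, hf, fun i => by rw [← hft]; rfl⟩

/-- choose an element of the dense domain close to any vector. -/
lemma exists_domain_close (y : X) {ε : ℝ} (hε : 0 < ε) :
    ∃ e : ρ.domain, ‖(e : X) - y‖ < ε := by
  have hy : y ∈ closure (ρ.domain : Set X) := ρ.dense' y
  rw [Metric.mem_closure_iff] at hy
  obtain ⟨e, he, hd⟩ := hy ε hε
  exact ⟨⟨e, he⟩, by rwa [← dist_eq_norm, dist_comm]⟩

/-- Core construction: finite-rank elements of `𝒜_π` with `T x` close to `y`. -/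
lemma exists_finrank_close [CompleteSpace X] (hreg : QRepRegular ρ) {x : X} (hx : x ≠ 0)
    (y : X) {ε : ℝ} (hε : 0 < ε) :
    ∃ T ∈ AlgPi ρ, FiniteRank T ∧ ‖T x - y‖ < ε := by
  obtain ⟨f, hf, hfx⟩ := exists_estar ρ hreg hx
  obtain ⟨C, hC0, hC⟩ := hf
  set c : QuaternionGroup 2 → ℝ := fun g => Fg ρ f C hC g x with hc
  set q : Quaternion ℝ :=
    ⟨c (a 0) - c (a 2), c (a 3) - c (a 1), c (xa 2) - c (xa 0), c (xa 1) - c (xa 3)⟩ with hq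
  have hqre : q.re = 2 * f x := by
    have h0 : c (a 0) = f x := by rw [hc]; simp only []; rw [Fg_a0]
    have h2 : c (a 2) = -f x := by
      rw [hc]; simp only []; rw [Fg_a2]; simp
    simp only [hq, h0, h2]; ring
  have hqne : q ≠ 0 := by
    intro h
    have : q.re = 0 := by rw [h]; rfl
    rw [hqre] at this
    exact hfx (by linarith)
  obtain ⟨e, he⟩ := exists_domain_close ρ y hε
  set u : ρ.domain := Pimap ρ q⁻¹ e with hu
  refine ⟨Top ρ f C hC u, Top_mem_AlgPi ρ f C hC u, Top_finiteRank ρ f C hC u, ?_⟩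
  have hTx : Top ρ f C hC u x = (e : X) := by
    rw [Top_apply]
    have : ∑ g : QuaternionGroup 2, Fg ρ f C hC g x • ((ρ.pi g⁻¹ u : X)) =
        ((∑ g : QuaternionGroup 2, c g • ρ.pi g⁻¹ u : ρ.domain) : X) := by
      push_cast
      rfl
    rw [this, sum_smul_pi_inv, ← hq, hu, Pimap_inv_cancel ρ hqne]
  rwa [hTx]

/-- a nonzero vector exists. -/
lemma exists_ne_zero (hinf : ¬ FiniteDimensional ℝ X) : ∃ x : X, x ≠ 0 := by
  by_contra hcon
  push_neg at hcon
  apply hinf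
  have : Subsingleton X := ⟨fun a b => by rw [hcon a, hcon b]⟩
  infer_instance
end Stmt16

namespace Stmt16

open QuaternionGroup Filter Topology

variable {X : Type*} [NormedAddCommGroup X] [NormedSpace ℝ X]
variable (ρ : QRep X)

/-- `𝒜_π` is SOT-closed (uses closedness of `π`). -/
lemma algPi_SOTClosed (hcl : QRepClosed ρ) : SOTClosed (AlgPi ρ) := by
  classical
  intro T hT
  intro x
  -- for each n, choose Sₙ approximating T on the orbit of x
  have hchoice : ∀ n : ℕ, ∃ S ∈ AlgPi ρ, ∀ g : QuaternionGroup 2,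
      ‖S (ρ.pi g x : X) - T (ρ.pi g x : X)‖ < 1 / (n + 1) := by
    intro n
    obtain ⟨S, hS, hSs⟩ := hT (1 / (n + 1)) (by positivity)
      (Finset.image (fun g : QuaternionGroup 2 => ((ρ.pi g x : X))) Finset.univ)
    exact ⟨S, hS, fun g => hSs _ (Finset.mem_image_of_mem _ (Finset.mem_univ g))⟩
  choose S hS hSs using hchoice
  -- the sequence yₙ from membership of Sₙ
  have hy : ∀ n : ℕ, ∃ y : ρ.domain, ((y : X) = S n x) ∧
      ∀ g : QuaternionGroup 2, S n (ρ.pi g x : X) = (ρ.pi g y : X) := fun n => hS n x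
  choose y hy1 hy2 using hy
  have htend : ∀ g : QuaternionGroup 2,
      Tendsto (fun n => ((ρ.pi g (y n) : X))) atTop (𝓝 (T (ρ.pi g x : X))) := by
    intro g
    rw [tendsto_iff_norm_sub_tendsto_zero]
    have hb : ∀ n : ℕ, ‖((ρ.pi g (y n) : X)) - T (ρ.pi g x : X)‖ ≤ 1 / (n + 1) := by
      intro n
      rw [← hy2 n g]
      exact le_of_lt (hSs n g)
    have h0 : Tendsto (fun n : ℕ => 1 / ((n : ℝ) + 1)) atTop (𝓝 0) :=
      tendsto_one_div_add_atTop_nhds_zero_nat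
    exact squeeze_zero (fun n => norm_nonneg _) hb h0
  obtain ⟨z, hz⟩ := hcl y (fun g => T (ρ.pi g x : X)) htend
  refine ⟨z, ?_, fun g => hz g⟩
  have h1 := hz 1
  rw [ρ.pi_one] at h1
  have hx1 : ρ.pi 1 x = x := by rw [ρ.pi_one]; rfl
  have := hz 1
  rw [hx1] at this
  rw [ρ.pi_one] at this
  exact this.symm

/-- `T(E) ⊆ E` and `T x ∈ T(E)` for finite-rank `T` in the algebra. -/
lemma mem_mapE {T : X →L[ℝ] X} (hT : T ∈ AF (AlgPi ρ)) (x : X) :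
    T x ∈ Submodule.map (T : X →ₗ[ℝ] X) ρ.domain := by
  have hfd : FiniteDimensional ℝ (Submodule.map (T : X →ₗ[ℝ] X) ρ.domain) := by
    have hle : Submodule.map (T : X →ₗ[ℝ] X) ρ.domain ≤ LinearMap.range (T : X →ₗ[ℝ] X) :=
      LinearMap.map_le_range
    have : FiniteDimensional ℝ (LinearMap.range (T : X →ₗ[ℝ] X)) := hT.2
    exact Submodule.finiteDimensional_of_le hle
  have hclosed : IsClosed ((Submodule.map (T : X →ₗ[ℝ] X) ρ.domain : Submodule ℝ X) : Set X) :=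
    Submodule.closed_of_finiteDimensional _
  have hx : x ∈ closure (ρ.domain : Set X) := ρ.dense' x
  have himg : T x ∈ T '' closure (ρ.domain : Set X) := ⟨x, hx, rfl⟩
  have hsub : T '' closure (ρ.domain : Set X) ⊆
      closure (T '' (ρ.domain : Set X)) :=
    image_closure_subset_closure_image T.continuous
  have himg2 : T x ∈ closure ((Submodule.map (T : X →ₗ[ℝ] X) ρ.domain : Submodule ℝ X) : Set X) := by
    apply closure_mono _ (hsub himg)
    rintro w ⟨e, he, rfl⟩
    exact ⟨e, he, rfl⟩
  rwa [hclosed.closure_eq] at himg2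

lemma mapE_le {T : X →L[ℝ] X} (hT : T ∈ AlgPi ρ) :
    Submodule.map (T : X →ₗ[ℝ] X) ρ.domain ≤ ρ.domain := by
  rintro w ⟨e, he, rfl⟩
  obtain ⟨y, hy, -⟩ := hT ⟨e, he⟩
  exact hy ▸ y.2

/-- `X^F ⊆ E`. -/
lemma hXF_le_E : XF (AlgPi ρ) ≤ ρ.domain := by
  rw [XF, Submodule.span_le]
  rintro w ⟨T, hT, x, rfl⟩
  exact mapE_le ρ hT.1 (mem_mapE ρ hT x)

/-- `X^F` is invariant under each `π(g)`. -/
lemma pi_XF_mem (g : QuaternionGroup 2) :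
    ∀ w : X, ∀ hw : w ∈ ρ.domain, w ∈ XF (AlgPi ρ) →
      ((ρ.pi g ⟨w, hw⟩ : ρ.domain) : X) ∈ XF (AlgPi ρ) := by
  -- prove that the set of such w forms a submodule containing the generators
  set Z : Submodule ℝ X :=
    { carrier := {w : X | ∃ hw : w ∈ ρ.domain, ((ρ.pi g ⟨w, hw⟩ : ρ.domain) : X) ∈ XF (AlgPi ρ)}
      add_mem' := by
        rintro w₁ w₂ ⟨h₁, hm₁⟩ ⟨h₂, hm₂⟩
        refine ⟨ρ.domain.add_mem h₁ h₂, ?_⟩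
        have : (⟨w₁ + w₂, ρ.domain.add_mem h₁ h₂⟩ : ρ.domain) = ⟨w₁, h₁⟩ + ⟨w₂, h₂⟩ := by
          apply Subtype.ext; rfl
        rw [this, map_add]
        push_cast
        exact Submodule.add_mem _ hm₁ hm₂
      zero_mem' := by
        refine ⟨ρ.domain.zero_mem, ?_⟩
        have : (⟨(0 : X), ρ.domain.zero_mem⟩ : ρ.domain) = 0 := rfl
        rw [this, map_zero]
        simpa using Submodule.zero_mem _
      smul_mem' := by
        rintro r w ⟨hw, hm⟩
        refine ⟨ρ.domain.smul_mem r hw, ?_⟩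
        have : (⟨r • w, ρ.domain.smul_mem r hw⟩ : ρ.domain) = r • ⟨w, hw⟩ := by
          apply Subtype.ext; rfl
        rw [this, map_smul]
        push_cast
        exact Submodule.smul_mem _ _ hm } with hZ
  have hgen : XF (AlgPi ρ) ≤ Z := by
    rw [XF, Submodule.span_le]
    rintro w ⟨T, hT, x, rfl⟩
    obtain ⟨e, he, hTe⟩ := mem_mapE ρ hT x
    have hTxE : T x ∈ ρ.domain := mapE_le ρ hT.1 (mem_mapE ρ hT x)
    refine ⟨hTxE, ?_⟩
    obtain ⟨y, hy, hyg⟩ := hT.1 ⟨e, he⟩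
    have hxy : (⟨T x, hTxE⟩ : ρ.domain) = y := by
      apply Subtype.ext
      show T x = (y : X)
      rw [← hTe]
      exact hy.symm
    rw [hxy]
    rw [← hyg g]
    exact Submodule.subset_span ⟨T, hT, _, rfl⟩
  intro w hw hwXF
  obtain ⟨hw', hm⟩ := hgen hwXF
  exact hm
end Stmt16

namespace Stmt16

open QuaternionGroup

variable {X : Type*} [NormedAddCommGroup X] [NormedSpace ℝ X]
variable (ρ : QRep X)

/-- inclusion `X^F → E`. -/
def inclXF : XF (AlgPi ρ) →ₗ[ℝ] ρ.domain := Submodule.inclusion (hXF_le_E ρ)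

lemma coe_inclXF (w : XF (AlgPi ρ)) : ((inclXF ρ w : ρ.domain) : X) = (w : X) := rfl

lemma Pimap_apply_coe (q : Quaternion ℝ) (z : ρ.domain) :
    ((Pimap ρ q z : ρ.domain) : X) =
      q.re • (z : X) + q.imI • ((ρ.pi gI z : ρ.domain) : X)
        + q.imJ • ((ρ.pi gJ z : ρ.domain) : X) + q.imK • ((ρ.pi gK z : ρ.domain) : X) := rfl

lemma Pimap_coe_mem (q : Quaternion ℝ) (w : XF (AlgPi ρ)) :
    ((Pimap ρ q (inclXF ρ w) : ρ.domain) : X) ∈ XF (AlgPi ρ) := by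
  rw [Pimap_apply_coe]
  have h1 : ((inclXF ρ w : ρ.domain) : X) ∈ XF (AlgPi ρ) := w.2
  have h2 := pi_XF_mem ρ gI (w : X) (hXF_le_E ρ w.2) w.2
  have h3 := pi_XF_mem ρ gJ (w : X) (hXF_le_E ρ w.2) w.2
  have h4 := pi_XF_mem ρ gK (w : X) (hXF_le_E ρ w.2) w.2
  exact Submodule.add_mem _ (Submodule.add_mem _ (Submodule.add_mem _
    (Submodule.smul_mem _ _ h1) (Submodule.smul_mem _ _ h2))
    (Submodule.smul_mem _ _ h3)) (Submodule.smul_mem _ _ h4)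

/-- the action of `Pimap q` on `X^F`. -/
def PsiXF (q : Quaternion ℝ) : Module.End ℝ (XF (AlgPi ρ)) :=
  LinearMap.codRestrict (XF (AlgPi ρ))
    ((ρ.domain.subtype ∘ₗ Pimap ρ q) ∘ₗ inclXF ρ)
    (fun w => Pimap_coe_mem ρ q w)

lemma PsiXF_coe (q : Quaternion ℝ) (w : XF (AlgPi ρ)) :
    ((PsiXF ρ q w : XF (AlgPi ρ)) : X) = ((Pimap ρ q (inclXF ρ w) : ρ.domain) : X) := rfl

lemma incl_PsiXF (q : Quaternion ℝ) (w : XF (AlgPi ρ)) :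
    inclXF ρ (PsiXF ρ q w) = Pimap ρ q (inclXF ρ w) := by
  apply Subtype.ext
  exact PsiXF_coe ρ q w

/-- `Ψ` as an algebra hom `ℍ → End(X^F)`. -/
def PsiAlg : Quaternion ℝ →ₐ[ℝ] Module.End ℝ (XF (AlgPi ρ)) :=
  AlgHom.ofLinearMap
    { toFun := PsiXF ρ
      map_add' := fun q r => by
        ext w
        rw [LinearMap.add_apply, Submodule.coe_add, PsiXF_coe, PsiXF_coe, PsiXF_coe,
          Pimap_add, LinearMap.add_apply, Submodule.coe_add]
      map_smul' := fun c q => by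
        ext w
        simp only [RingHom.id_apply]
        rw [LinearMap.smul_apply, Submodule.coe_smul, PsiXF_coe, PsiXF_coe,
          Pimap_smul, LinearMap.smul_apply, Submodule.coe_smul] }
    (by
      ext w
      simp only [LinearMap.coe_mk, AddHom.coe_mk]
      rw [Module.End.one_apply, PsiXF_coe, Pimap_one, Module.End.one_apply]
      rfl)
    (fun q r => by
      ext w
      simp only [LinearMap.coe_mk, AddHom.coe_mk]
      rw [Module.End.mul_apply, PsiXF_coe, PsiXF_coe, incl_PsiXF, Pimap_mul, Module.End.mul_apply])

lemma PsiAlg_apply (q : Quaternion ℝ) : PsiAlg ρ q = PsiXF ρ q := rfl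

/-- operators in `𝒜_π` commute with `Pimap q` on the domain. -/
lemma key_comm {T : X →L[ℝ] X} (q : Quaternion ℝ) (e y : ρ.domain)
    (hy : (y : X) = T e) (hyg : ∀ g : QuaternionGroup 2, T ((ρ.pi g e : ρ.domain) : X) = ((ρ.pi g y : ρ.domain) : X)) :
    T ((Pimap ρ q e : ρ.domain) : X) = ((Pimap ρ q y : ρ.domain) : X) := by
  rw [Pimap_apply_coe, Pimap_apply_coe]
  simp only [map_add, ContinuousLinearMap.map_smul, hyg gI, hyg gJ, hyg gK, ← hy]

lemma PsiXF_mem_DD (q : Quaternion ℝ) : PsiXF ρ q ∈ DD (AlgPi ρ) := by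
  unfold DD
  rw [Subalgebra.mem_centralizer_iff]
  rintro m ⟨T, hT, rfl⟩
  ext w
  obtain ⟨y, hy, hyg⟩ := hT.1 (inclXF ρ w)
  have hrw : ((T : X →ₗ[ℝ] X).restrict (mapsto_XF hT) w : X) = T (w : X) := rfl
  have h1 : (((T : X →ₗ[ℝ] X).restrict (mapsto_XF hT) * PsiXF ρ q) w : X) =
      T ((Pimap ρ q (inclXF ρ w) : ρ.domain) : X) := rfl
  have h2 : ((PsiXF ρ q * (T : X →ₗ[ℝ] X).restrict (mapsto_XF hT)) w : X) =
      ((Pimap ρ q (inclXF ρ ((T : X →ₗ[ℝ] X).restrict (mapsto_XF hT) w)) : ρ.domain) : X) := rfl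
  rw [h1, h2]
  have h3 : inclXF ρ ((T : X →ₗ[ℝ] X).restrict (mapsto_XF hT) w) = y := by
    apply Subtype.ext
    show ((T : X →ₗ[ℝ] X).restrict (mapsto_XF hT) w : X) = (y : X)
    rw [hrw, hy]
    rfl
  rw [h3]
  exact key_comm ρ q (inclXF ρ w) y hy hyg

/-- the algebra hom `ℍ → 𝔻`. -/
def PhiDD : Quaternion ℝ →ₐ[ℝ] DD (AlgPi ρ) :=
  (PsiAlg ρ).codRestrict (DD (AlgPi ρ)) (fun q => PsiXF_mem_DD ρ q)

lemma PhiDD_coe (q : Quaternion ℝ) : ((PhiDD ρ q : DD (AlgPi ρ)) : Module.End ℝ (XF (AlgPi ρ))) = PsiXF ρ q := rfl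

lemma Pimap_cancel_left {q : Quaternion ℝ} (hq : q ≠ 0) (w : ρ.domain) :
    Pimap ρ q⁻¹ (Pimap ρ q w) = w := by
  have h : Pimap ρ q⁻¹ * Pimap ρ q = 1 := by
    rw [← Pimap_mul, inv_mul_cancel₀ hq, Pimap_one]
  calc Pimap ρ q⁻¹ (Pimap ρ q w) = (Pimap ρ q⁻¹ * Pimap ρ q) w := rfl
  _ = w := by rw [h]; rfl

lemma Pimap_eq_zero {q : Quaternion ℝ} {w : ρ.domain} (h : Pimap ρ q w = 0) (hq : q ≠ 0) :
    w = 0 := by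
  have := Pimap_cancel_left ρ hq w
  rw [h, map_zero] at this
  exact this.symm

end Stmt16

namespace Stmt16
open QuaternionGroup
variable {X : Type*} [NormedAddCommGroup X] [NormedSpace ℝ X] (ρ : QRep X)

lemma Pimap_real (r : ℝ) (w : ρ.domain) :
    Pimap ρ (⟨r, 0, 0, 0⟩ : Quaternion ℝ) w = r • w := by
  simp [Pimap, LinearMap.add_apply, LinearMap.smul_apply, Module.End.one_apply]

lemma Pimap_sub (q r : Quaternion ℝ) : Pimap ρ (q - r) = Pimap ρ q - Pimap ρ r := by
  rw [sub_eq_add_neg, ← neg_one_smul ℝ r, Pimap_add, Pimap_smul]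
  module

end Stmt16

open Stmt16 QuaternionGroup

/-- If `π` is a closed and regular representation of the quaternion group
on a dense subspace of an infinite-dimensional real Banach space (with `π(1) = id`,
`π(-1) = -id`), then `𝒜_π` is a Lomonosov algebra of quaternion type: SOT-closed,
transitive, containing a nonzero finite-rank operator, and of quaternion type. -/
theorem stmt16 {X : Type*} [NormedAddCommGroup X] [NormedSpace ℝ X] [CompleteSpace X]
    (hinf : ¬ FiniteDimensional ℝ X)
    (ρ : QRep X) (hcl : QRepClosed ρ) (hreg : QRepRegular ρ) :
    SOTClosed (AlgPi ρ) ∧ IsTransitiveAlg (AlgPi ρ) ∧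
    (∃ T ∈ AlgPi ρ, T ≠ 0 ∧ FiniteRank T) ∧ QuaternionType (AlgPi ρ) := by
  classical
  obtain ⟨x0, hx0⟩ := exists_ne_zero (X := X) hinf
  obtain ⟨T0, hT0mem, hT0fr, hT0close⟩ :=
    exists_finrank_close ρ hreg hx0 x0 (norm_pos_iff.2 hx0)
  have hT0x : T0 x0 ≠ 0 := by
    intro h
    rw [h, zero_sub, norm_neg] at hT0close
    exact lt_irrefl _ hT0close
  have hT0ne : T0 ≠ 0 := by
    intro h; apply hT0x; rw [h]; rfl
  have hw₀XF : T0 x0 ∈ XF (AlgPi ρ) :=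
    Submodule.subset_span ⟨T0, ⟨hT0mem, hT0fr⟩, x0, rfl⟩
  refine ⟨algPi_SOTClosed ρ hcl, ?_, ⟨T0, hT0mem, hT0ne, hT0fr⟩, ?_⟩
  · intro x hx y ε hε
    obtain ⟨T, h1, -, h3⟩ := exists_finrank_close ρ hreg hx y hε
    exact ⟨T, h1, h3⟩
  -- quaternion type
  set w₀ : XF (AlgPi ρ) := ⟨T0 x0, hw₀XF⟩ with hw₀def
  have hw₀ne : (w₀ : X) ≠ 0 := hT0x
  set v₀ : ρ.domain := inclXF ρ w₀ with hv₀def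
  have hv₀coe : (v₀ : X) = (w₀ : X) := rfl
  -- linear independence of the orbit of v₀
  have hind : LinearIndependent ℝ
      ![(v₀ : X), ((ρ.pi gI v₀ : ρ.domain) : X), ((ρ.pi gJ v₀ : ρ.domain) : X),
        ((ρ.pi gK v₀ : ρ.domain) : X)] := by
    rw [Fintype.linearIndependent_iff]
    intro cc hcc
    have hPim : ((Pimap ρ ⟨cc 0, cc 1, cc 2, cc 3⟩ v₀ : ρ.domain) : X) = 0 := by
      erw [Pimap_apply_coe]
      rw [Fin.sum_univ_four] at hcc
      simpa [Matrix.cons_val_zero, Matrix.cons_val_one, Matrix.head_cons] using hcc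
    have hq0 : (⟨cc 0, cc 1, cc 2, cc 3⟩ : Quaternion ℝ) = 0 := by
      by_contra hne
      have hz : Pimap ρ ⟨cc 0, cc 1, cc 2, cc 3⟩ v₀ = 0 := by
        apply Subtype.ext; simpa using hPim
      have hv0 := Pimap_eq_zero ρ hz hne
      apply hw₀ne
      rw [← hv₀coe, hv0]
      rfl
    obtain ⟨h0, h1, h2, h3⟩ := Quaternion.ext_iff.1 hq0
    intro i; fin_cases i <;> simp_all
  obtain ⟨f₀, hf₀mem, hf₀val⟩ := exists_estar_dual ρ hreg hind ![1, 0, 0, 0]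
  obtain ⟨C, hC0, hC⟩ := hf₀mem
  -- the eight values of f₀ on the orbit of v₀
  have hb0 : f₀ ((ρ.pi (a 0) v₀ : ρ.domain) : X) = 1 := by
    have h : ρ.pi (a 0) v₀ = v₀ := by rw [pi_a0]; rfl
    rw [h]; simpa using hf₀val 0
  have hbI : f₀ ((ρ.pi (a 1) v₀ : ρ.domain) : X) = 0 := by
    simpa [gI] using hf₀val 1
  have hbJ : f₀ ((ρ.pi (xa 0) v₀ : ρ.domain) : X) = 0 := by
    simpa [gJ] using hf₀val 2
  have hbK : f₀ ((ρ.pi (xa 3) v₀ : ρ.domain) : X) = 0 := by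
    simpa [gK] using hf₀val 3
  have hb2 : f₀ ((ρ.pi (a 2) v₀ : ρ.domain) : X) = -1 := by
    have h : ρ.pi (a 2) v₀ = -v₀ := by rw [ρ.pi_neg_one]; rfl
    rw [h]
    have hcoe : ((-v₀ : ρ.domain) : X) = -(v₀ : X) := rfl
    rw [hcoe, map_neg]
    have h1 : f₀ ((v₀ : ρ.domain) : X) = 1 := by simpa using hf₀val 0
    rw [h1]
  have hb3 : f₀ ((ρ.pi (a 3) v₀ : ρ.domain) : X) = 0 := by
    have h : ρ.pi (a 3) v₀ = -(ρ.pi gI v₀) := by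
      rw [show (a 3 : QuaternionGroup 2) = gN * gI from by decide, pi_neg]; rfl
    rw [h, show ((-(ρ.pi gI v₀) : ρ.domain) : X) = -((ρ.pi gI v₀ : ρ.domain) : X) from rfl,
      map_neg]
    have h1 : f₀ ((ρ.pi gI v₀ : ρ.domain) : X) = 0 := by simpa using hf₀val 1
    rw [h1, neg_zero]
  have hbx1 : f₀ ((ρ.pi (xa 1) v₀ : ρ.domain) : X) = 0 := by
    have h : ρ.pi (xa 1) v₀ = -(ρ.pi gK v₀) := by
      rw [show (xa 1 : QuaternionGroup 2) = gN * gK from by decide, pi_neg]; rfl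
    rw [h, show ((-(ρ.pi gK v₀) : ρ.domain) : X) = -((ρ.pi gK v₀ : ρ.domain) : X) from rfl,
      map_neg]
    have h1 : f₀ ((ρ.pi gK v₀ : ρ.domain) : X) = 0 := by simpa using hf₀val 3
    rw [h1, neg_zero]
  have hbx2 : f₀ ((ρ.pi (xa 2) v₀ : ρ.domain) : X) = 0 := by
    have h : ρ.pi (xa 2) v₀ = -(ρ.pi gJ v₀) := by
      rw [show (xa 2 : QuaternionGroup 2) = gN * gJ from by decide, pi_neg]; rfl
    rw [h, show ((-(ρ.pi gJ v₀) : ρ.domain) : X) = -((ρ.pi gJ v₀ : ρ.domain) : X) from rfl,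
      map_neg]
    have h1 : f₀ ((ρ.pi gJ v₀ : ρ.domain) : X) = 0 := by simpa using hf₀val 2
    rw [h1, neg_zero]
  -- the key computation
  have key : ∀ SS : DD (AlgPi ρ), ∀ w : XF (AlgPi ρ),
      ((Pimap ρ ⟨(fun g => f₀ ((ρ.pi g (inclXF ρ ((SS : Module.End ℝ (XF (AlgPi ρ))) w₀)) : ρ.domain) : X)) (a 0)
            - (fun g => f₀ ((ρ.pi g (inclXF ρ ((SS : Module.End ℝ (XF (AlgPi ρ))) w₀)) : ρ.domain) : X)) (a 2),
          (fun g => f₀ ((ρ.pi g (inclXF ρ ((SS : Module.End ℝ (XF (AlgPi ρ))) w₀)) : ρ.domain) : X)) (a 3)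
            - (fun g => f₀ ((ρ.pi g (inclXF ρ ((SS : Module.End ℝ (XF (AlgPi ρ))) w₀)) : ρ.domain) : X)) (a 1),
          (fun g => f₀ ((ρ.pi g (inclXF ρ ((SS : Module.End ℝ (XF (AlgPi ρ))) w₀)) : ρ.domain) : X)) (xa 2)
            - (fun g => f₀ ((ρ.pi g (inclXF ρ ((SS : Module.End ℝ (XF (AlgPi ρ))) w₀)) : ρ.domain) : X)) (xa 0),
          (fun g => f₀ ((ρ.pi g (inclXF ρ ((SS : Module.End ℝ (XF (AlgPi ρ))) w₀)) : ρ.domain) : X)) (xa 1)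
            - (fun g => f₀ ((ρ.pi g (inclXF ρ ((SS : Module.End ℝ (XF (AlgPi ρ))) w₀)) : ρ.domain) : X)) (xa 3)⟩
        (inclXF ρ w) : ρ.domain) : X) = (2 : ℝ) • (((SS : Module.End ℝ (XF (AlgPi ρ))) w : XF (AlgPi ρ)) : X) := by
    intro SS w
    set S : Module.End ℝ (XF (AlgPi ρ)) := (SS : Module.End ℝ (XF (AlgPi ρ))) with hSdef
    set u : ρ.domain := inclXF ρ w with hudef
    set T : X →L[ℝ] X := Top ρ f₀ C hC u with hTdef
    have hTAF : T ∈ AF (AlgPi ρ) := ⟨Top_mem_AlgPi ρ f₀ C hC u, Top_finiteRank ρ f₀ C hC u⟩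
    have hcm := SS.2
    unfold DD at hcm
    rw [Subalgebra.mem_centralizer_iff] at hcm
    have hcomm := hcm _ ⟨T, hTAF, rfl⟩
    have happ := congrArg (fun M : Module.End ℝ (XF (AlgPi ρ)) => ((M w₀ : XF (AlgPi ρ)) : X)) hcomm
    simp only [Module.End.mul_apply] at happ
    -- LHS of happ : T applied to (S w₀)
    have hL : (((T : X →ₗ[ℝ] X).restrict (mapsto_XF hTAF) (S w₀) : XF (AlgPi ρ)) : X)
        = ((Pimap ρ ⟨(fun g => f₀ ((ρ.pi g (inclXF ρ (S w₀)) : ρ.domain) : X)) (a 0)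
            - (fun g => f₀ ((ρ.pi g (inclXF ρ (S w₀)) : ρ.domain) : X)) (a 2),
          (fun g => f₀ ((ρ.pi g (inclXF ρ (S w₀)) : ρ.domain) : X)) (a 3)
            - (fun g => f₀ ((ρ.pi g (inclXF ρ (S w₀)) : ρ.domain) : X)) (a 1),
          (fun g => f₀ ((ρ.pi g (inclXF ρ (S w₀)) : ρ.domain) : X)) (xa 2)
            - (fun g => f₀ ((ρ.pi g (inclXF ρ (S w₀)) : ρ.domain) : X)) (xa 0),
          (fun g => f₀ ((ρ.pi g (inclXF ρ (S w₀)) : ρ.domain) : X)) (xa 1)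
            - (fun g => f₀ ((ρ.pi g (inclXF ρ (S w₀)) : ρ.domain) : X)) (xa 3)⟩
          u : ρ.domain) : X) := by
      have h1 : (((T : X →ₗ[ℝ] X).restrict (mapsto_XF hTAF) (S w₀) : XF (AlgPi ρ)) : X)
          = T ((inclXF ρ (S w₀) : ρ.domain) : X) := rfl
      rw [h1, Top_apply_coe, sum_smul_pi_inv ρ (fun g => f₀ ((ρ.pi g (inclXF ρ (S w₀)) : ρ.domain) : X)) u]
    -- RHS of happ : S applied to T|XF w₀
    have hR : (((T : X →ₗ[ℝ] X).restrict (mapsto_XF hTAF) w₀ : XF (AlgPi ρ))) = (2 : ℝ) • w := by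
      apply Subtype.ext
      have h1 : (((T : X →ₗ[ℝ] X).restrict (mapsto_XF hTAF) w₀ : XF (AlgPi ρ)) : X)
          = T ((v₀ : ρ.domain) : X) := rfl
      rw [h1, Top_apply_coe, sum_smul_pi_inv ρ (fun g => f₀ ((ρ.pi g v₀ : ρ.domain) : X)) u]
      have hq2 : (⟨(fun g => f₀ ((ρ.pi g v₀ : ρ.domain) : X)) (a 0)
            - (fun g => f₀ ((ρ.pi g v₀ : ρ.domain) : X)) (a 2),
          (fun g => f₀ ((ρ.pi g v₀ : ρ.domain) : X)) (a 3)
            - (fun g => f₀ ((ρ.pi g v₀ : ρ.domain) : X)) (a 1),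
          (fun g => f₀ ((ρ.pi g v₀ : ρ.domain) : X)) (xa 2)
            - (fun g => f₀ ((ρ.pi g v₀ : ρ.domain) : X)) (xa 0),
          (fun g => f₀ ((ρ.pi g v₀ : ρ.domain) : X)) (xa 1)
            - (fun g => f₀ ((ρ.pi g v₀ : ρ.domain) : X)) (xa 3)⟩ : Quaternion ℝ)
          = (⟨2, 0, 0, 0⟩ : Quaternion ℝ) := by
        simp only [hb0, hb2, hb3, hbI, hbJ, hbK, hbx1, hbx2]
        norm_num
      rw [hq2, Pimap_real]
      have : ((((2:ℝ) • u : ρ.domain)) : X) = (2 : ℝ) • ((u : ρ.domain) : X) := rfl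
      rw [this]
      rfl
    rw [hL, hR] at happ
    rw [happ, map_smul]
    rfl
  -- injectivity
  have hinj : Function.Injective (PhiDD ρ) := by
    intro q r h
    by_contra hne
    have hd : q - r ≠ 0 := sub_ne_zero.2 hne
    have h1 : PsiXF ρ q = PsiXF ρ r := by
      have h2 := congrArg (Subtype.val) h
      simpa [PhiDD_coe] using h2
    have h3 := congrArg (fun M : Module.End ℝ (XF (AlgPi ρ)) => ((M w₀ : XF (AlgPi ρ)) : X)) h1
    simp only [PsiXF_coe] at h3
    have h2 : Pimap ρ (q - r) v₀ = 0 := by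
      apply Subtype.ext
      rw [Pimap_sub, LinearMap.sub_apply]
      have hc : ((Pimap ρ q v₀ - Pimap ρ r v₀ : ρ.domain) : X)
          = ((Pimap ρ q v₀ : ρ.domain) : X) - ((Pimap ρ r v₀ : ρ.domain) : X) := rfl
      rw [hc]
      rw [show ((Pimap ρ q v₀ : ρ.domain) : X) = ((Pimap ρ q (inclXF ρ w₀) : ρ.domain) : X) from rfl,
        h3, sub_self]
      rfl
    have hv0 := Pimap_eq_zero ρ h2 hd
    apply hw₀ne
    rw [← hv₀coe, hv0]
    rfl
  -- surjectivity
  have hsurj : Function.Surjective (PhiDD ρ) := by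
    intro SS
    refine ⟨(2⁻¹ : ℝ) • ⟨(fun g => f₀ ((ρ.pi g (inclXF ρ ((SS : Module.End ℝ (XF (AlgPi ρ))) w₀)) : ρ.domain) : X)) (a 0)
            - (fun g => f₀ ((ρ.pi g (inclXF ρ ((SS : Module.End ℝ (XF (AlgPi ρ))) w₀)) : ρ.domain) : X)) (a 2),
          (fun g => f₀ ((ρ.pi g (inclXF ρ ((SS : Module.End ℝ (XF (AlgPi ρ))) w₀)) : ρ.domain) : X)) (a 3)
            - (fun g => f₀ ((ρ.pi g (inclXF ρ ((SS : Module.End ℝ (XF (AlgPi ρ))) w₀)) : ρ.domain) : X)) (a 1),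
          (fun g => f₀ ((ρ.pi g (inclXF ρ ((SS : Module.End ℝ (XF (AlgPi ρ))) w₀)) : ρ.domain) : X)) (xa 2)
            - (fun g => f₀ ((ρ.pi g (inclXF ρ ((SS : Module.End ℝ (XF (AlgPi ρ))) w₀)) : ρ.domain) : X)) (xa 0),
          (fun g => f₀ ((ρ.pi g (inclXF ρ ((SS : Module.End ℝ (XF (AlgPi ρ))) w₀)) : ρ.domain) : X)) (xa 1)
            - (fun g => f₀ ((ρ.pi g (inclXF ρ ((SS : Module.End ℝ (XF (AlgPi ρ))) w₀)) : ρ.domain) : X)) (xa 3)⟩, ?_⟩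
    apply Subtype.ext
    rw [PhiDD_coe]
    ext w
    erw [PsiXF_coe, Pimap_smul, LinearMap.smul_apply, Submodule.coe_smul, key SS w, smul_smul]
    norm_num
  exact ⟨(AlgEquiv.ofBijective (PhiDD ρ) ⟨hinj, hsurj⟩).symm⟩

end
end
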